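/- Let ψ_1, …, ψ_m (m ≥ 2) be contracting similarities of ℝ with ratios r_1, …, r_m ∈ (0,1) such that the intervals ψ_i([0,1]) ⊆ [0,1] are pairwise disjoint and ordered: 0 = ψ_1(0) < ψ_1(1) < ψ_2(0) < ⋯ < ψ_m(0) < ψ_m(1) = 1, let F be the attractor (F = ⋃ ψ_i(F)), and let μ be the self-similar probability measure associated to weights p_1, …, p_m > 0 with Σ p_i = 1, i.e. the unique Borel probability measure with μ(A) = Σ_{i=1}^m p_i μ(ψ_i^{-1}(A)) for all Borel A. Then for every q ∈ ℝ and every a > 0, β_a(q) equals the unique real number β satisfying Σ_{i=1}^m p_i^q r_i^β = 1. -/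

import Mathlib

open MeasureTheory Filter Set
open scoped Classical

noncomputable section

/-- The enlargement `B̄^a` of the interval `[s,t]` by the factor `1+a` about its centre. -/
def enlarge (a s t : ℝ) : Set ℝ :=
  Set.Icc (s - a * (t - s) / 2) (t + a * (t - s) / 2)

/-- The moment sum `Σ_{B ∈ B_r^*} μ(B̄^a)^q` over grid intervals of length `r`
whose interior meets the support of `μ` (i.e. with `μ(B) > 0`). -/
def gridSum (μ : Measure ℝ) (a q R : ℝ) : ℝ :=
  ∑' m : ℤ, if 0 < μ (Set.Icc ((m : ℝ) * R) (((m : ℝ) + 1) * R))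
    then (μ (enlarge a ((m : ℝ) * R) (((m : ℝ) + 1) * R))).toReal ^ q else 0

/-- The coarse multifractal moment function
`β_a(q) = inf{β : limsup_{r→0⁺} r^β Σ_{B ∈ B_r^*} μ(B̄^a)^q = 0}`.
(For the nonnegative quantity `r^β · Σ…`, vanishing of the `limsup` as `r → 0⁺`
is the same as convergence to `0`.) -/
def betaA (μ : Measure ℝ) (a q : ℝ) : ℝ :=
  sInf {β : ℝ | Filter.Tendsto (fun R => R ^ β * gridSum μ a q R)
    (nhdsWithin 0 (Set.Ioi 0)) (nhds 0)}

/-- `F` is a "fractal subset" of `[0,1]`: compact, Lebesgue-null, containing `0` and `1`. -/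
def IsFractalSubset (F : Set ℝ) : Prop :=
  IsCompact F ∧ F ⊆ Set.Icc 0 1 ∧ (0 : ℝ) ∈ F ∧ (1 : ℝ) ∈ F ∧ MeasureTheory.volume F = 0

/-- The complementary intervals `I_n = (l n, r n)` of `F` in `[0,1]`, enumerated with
nonincreasing lengths. -/
structure FractalComplement (F : Set ℝ) where
  l : ℕ → ℝ
  r : ℕ → ℝ
  lt : ∀ n, l n < r n
  disj : Pairwise fun n m => Disjoint (Set.Ioo (l n) (r n)) (Set.Ioo (l m) (r m))
  union : (⋃ n, Set.Ioo (l n) (r n)) = Set.Icc (0 : ℝ) 1 \ F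
  mono : ∀ n, r (n + 1) - l (n + 1) ≤ r n - l n

/-- The length `|I_n|` of the `n`-th complementary interval. -/
def FractalComplement.len {F : Set ℝ} (c : FractalComplement F) (n : ℕ) : ℝ := c.r n - c.l n

/-- The enlargement `Ī_n^a` of the closure of the complementary interval `I_n`. -/
def FractalComplement.I {F : Set ℝ} (c : FractalComplement F) (a : ℝ) (n : ℕ) : Set ℝ :=
  enlarge a (c.l n) (c.r n)

/-- The lacunarity condition with constant `lam`: every interval `[x-r, x+r]` with `x ∈ F`
and `0 < r ≤ 1` contains a complementary interval of length at least `lam * r`. -/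
def Lacunary {F : Set ℝ} (c : FractalComplement F) (lam : ℝ) : Prop :=
  ∀ x ∈ F, ∀ R : ℝ, 0 < R → R ≤ 1 → ∃ n,
    Set.Ioo (c.l n) (c.r n) ⊆ Set.Icc (x - R) (x + R) ∧ lam * R ≤ c.len n

/-- The topological support of `μ` is exactly `F`. -/
def HasSupport (μ : Measure ℝ) (F : Set ℝ) : Prop :=
  μ Fᶜ = 0 ∧ ∀ x ∈ F, ∀ ε : ℝ, 0 < ε → 0 < μ (Set.Ioo (x - ε) (x + ε))


structure IFSSetup where
  m : ℕ
  hm : 2 ≤ m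
  b : Fin m → ℝ
  r : Fin m → ℝ
  p : Fin m → ℝ
  hr0 : ∀ i, 0 < r i
  hr1 : ∀ i, r i < 1
  hp : ∀ i, 0 < p i
  hpsum : ∑ i, p i = 1
  hb0 : ∀ i, 0 ≤ b i
  hb1 : ∀ i, b i + r i ≤ 1
  horder : ∀ i j : Fin m, (i : ℕ) < (j : ℕ) → b i + r i < b j
  hfirst : ∃ i, b i = 0
  hlast : ∃ i, b i + r i = 1
  μ : Measure ℝ
  hprob : IsProbabilityMeasure μ
  hiter : ∀ A : Set ℝ, MeasurableSet A →
    μ A = ∑ i, ENNReal.ofReal (p i) * μ ((fun x => b i + r i * x) ⁻¹' A)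

namespace IFSSetup

variable (S : IFSSetup)

/-- The contraction maps. -/
def f (i : Fin S.m) (x : ℝ) : ℝ := S.b i + S.r i * x

lemma hmpos : 0 < S.m := lt_of_lt_of_le two_pos S.hm

instance : Nonempty (Fin S.m) := ⟨⟨0, S.hmpos⟩⟩

instance : IsProbabilityMeasure S.μ := S.hprob

lemma f_preimage_Icc (i : Fin S.m) (s t : ℝ) :
    (S.f i) ⁻¹' Icc s t = Icc ((s - S.b i) / S.r i) ((t - S.b i) / S.r i) := by
  ext x
  simp only [f, mem_preimage, mem_Icc]
  rw [div_le_iff₀ (S.hr0 i), le_div_iff₀ (S.hr0 i)]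
  constructor <;> intro h <;> constructor <;> nlinarith [h.1, h.2]

/-- the inverse map of `f i` -/
def finv (i : Fin S.m) (y : ℝ) : ℝ := (y - S.b i) / S.r i

lemma finv_f (i : Fin S.m) (x : ℝ) : S.finv i (S.f i x) = x := by
  have := (S.hr0 i).ne'
  simp only [finv, f, add_sub_cancel_left]
  field_simp

lemma f_finv (i : Fin S.m) (y : ℝ) : S.f i (S.finv i y) = y := by
  have := S.hr0 i
  simp only [finv, f]
  field_simp
  ring

lemma f_image_eq_preimage (i : Fin S.m) (A : Set ℝ) :
    (S.f i) '' A = (S.finv i) ⁻¹' A := by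
  ext y
  constructor
  · rintro ⟨x, hx, rfl⟩; simpa [S.finv_f] using hx
  · intro hy; exact ⟨S.finv i y, hy, S.f_finv i y⟩

lemma finv_measurable (i : Fin S.m) : Measurable (S.finv i) := by
  unfold finv
  fun_prop

lemma f_image_measurable (i : Fin S.m) {A : Set ℝ} (hA : MeasurableSet A) :
    MeasurableSet ((S.f i) '' A) := by
  rw [S.f_image_eq_preimage]; exact S.finv_measurable i hA

lemma f_image_Icc (i : Fin S.m) (s t : ℝ) :
    (S.f i) '' Icc s t = Icc (S.f i s) (S.f i t) := by
  rw [S.f_image_eq_preimage]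
  ext x
  simp only [mem_preimage, mem_Icc, finv, f]
  rw [le_div_iff₀ (S.hr0 i), div_le_iff₀ (S.hr0 i)]
  constructor <;> intro h <;> constructor <;> nlinarith [h.1, h.2]

lemma f_mono (i : Fin S.m) : StrictMono (S.f i) := fun x y h => by
  simp only [f]; nlinarith [S.hr0 i]

lemma f_measurable (i : Fin S.m) : Measurable (S.f i) := by
  unfold f
  fun_prop

lemma p_le_one (i : Fin S.m) : S.p i ≤ 1 := by
  have h := S.hpsum
  have : ∀ j ∈ (Finset.univ : Finset (Fin S.m)), 0 ≤ S.p j := fun j _ => (S.hp j).le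
  calc S.p i ≤ ∑ j, S.p j := Finset.single_le_sum this (Finset.mem_univ i)
    _ = 1 := h

end IFSSetup

section Forcing
variable {m : ℕ}

lemma forcing (p x : Fin m → ℝ) (c : ℝ) (hp : ∀ i, 0 < p i)
    (hpsum : ∑ i, p i = 1) (hx : ∀ i, c ≤ x i) (h : ∑ i, p i * x i = c) :
    ∀ i, x i = c := by
  intro i
  by_contra hne
  have hxi : c < x i := lt_of_le_of_ne (hx i) (Ne.symm hne)
  have hlt : ∑ j, p j * c < ∑ j, p j * x j := by
    apply Finset.sum_lt_sum
    · intro j _; exact mul_le_mul_of_nonneg_left (hx j) (hp j).le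
    · exact ⟨i, Finset.mem_univ i, by nlinarith [hp i]⟩
  rw [h, ← Finset.sum_mul, hpsum, one_mul] at hlt
  exact lt_irrefl c hlt

end Forcing
namespace IFSSetup
variable (S : IFSSetup)

lemma mu_ne_top (A : Set ℝ) : S.μ A ≠ ⊤ :=
  (lt_of_le_of_lt prob_le_one (by norm_num)).ne

lemma one_sub_r_pos (i : Fin S.m) : 0 < 1 - S.r i := by nlinarith [S.hr1 i]

/-- the key averaging step: preimages of big intervals have the same measure -/
lemma step_measure {s t : ℝ} (hs : s ≤ 0) (ht : 1 ≤ t) (i : Fin S.m) :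
    S.μ (Icc (S.finv i s) (S.finv i t)) = S.μ (Icc s t) := by
  have hiter := S.hiter (Icc s t) measurableSet_Icc
  have hsub : ∀ j : Fin S.m, Icc s t ⊆ (S.f j) ⁻¹' (Icc s t) := by
    intro j
    rw [S.f_preimage_Icc]
    apply Icc_subset_Icc
    · rw [div_le_iff₀ (S.hr0 j)]
      nlinarith [S.hb0 j, S.hr1 j]
    · rw [le_div_iff₀ (S.hr0 j)]
      nlinarith [S.hb1 j, S.hr1 j,
        mul_le_mul_of_nonneg_right ht (le_of_lt (S.one_sub_r_pos j))]
  set c : ℝ := (S.μ (Icc s t)).toReal with hc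
  set x : Fin S.m → ℝ := fun j => (S.μ ((S.f j) ⁻¹' (Icc s t))).toReal with hxdef
  have hxc : ∀ j, c ≤ x j := fun j =>
    (ENNReal.toReal_le_toReal (S.mu_ne_top _) (S.mu_ne_top _)).mpr (measure_mono (hsub j))
  have hsum : ∑ j, S.p j * x j = c := by
    have h2 := congrArg ENNReal.toReal hiter
    rw [ENNReal.toReal_sum (fun a _ =>
      ENNReal.mul_ne_top ENNReal.ofReal_ne_top (S.mu_ne_top _))] at h2
    simp only [ENNReal.toReal_mul, ENNReal.toReal_ofReal (S.hp _).le] at h2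
    exact h2.symm
  have hall := forcing S.p x c S.hp S.hpsum hxc hsum i
  have heq : S.μ ((S.f i) ⁻¹' (Icc s t)) = S.μ (Icc s t) :=
    (ENNReal.toReal_eq_toReal_iff' (S.mu_ne_top _) (S.mu_ne_top _)).mp hall
  rw [← heq, S.f_preimage_Icc]
  rfl

/-- the iterated expansion sequence -/
def seqlr (i0 i1 : Fin S.m) : ℕ → ℝ × ℝ
  | 0 => (0, 1)
  | n + 1 => (S.finv i0 (S.finv i1 (seqlr i0 i1 n).1),
              S.finv i0 (S.finv i1 (seqlr i0 i1 n).2))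

lemma mu_Icc01 : S.μ (Icc (0:ℝ) 1) = 1 := by
  obtain ⟨i0, hi0⟩ := S.hfirst
  obtain ⟨i1, hi1⟩ := S.hlast
  set L : ℕ → ℝ := fun n => (S.seqlr i0 i1 n).1 with hL
  set Rr : ℕ → ℝ := fun n => (S.seqlr i0 i1 n).2 with hR
  have hr0 := S.hr0
  have hr1 := S.hr1
  have hL0 : L 0 = 0 := rfl
  have hR0 : Rr 0 = 1 := rfl
  have hLsucc : ∀ n, L (n + 1) = S.finv i0 (S.finv i1 (L n)) := fun n => rfl
  have hRsucc : ∀ n, Rr (n + 1) = S.finv i0 (S.finv i1 (Rr n)) := fun n => rfl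
  have hfinv_le : ∀ s : ℝ, s ≤ 0 → ∀ i, S.finv i s ≤ s := by
    intro s hs i
    rw [finv, div_le_iff₀ (hr0 i)]
    nlinarith [S.hb0 i, hr1 i]
  have hfinv_ge : ∀ t : ℝ, 1 ≤ t → ∀ i, t ≤ S.finv i t := by
    intro t ht i
    rw [finv, le_div_iff₀ (hr0 i)]
    nlinarith [S.hb1 i, hr1 i,
      mul_le_mul_of_nonneg_right ht (le_of_lt (S.one_sub_r_pos i))]
  have hinv : ∀ n, L n ≤ 0 ∧ 1 ≤ Rr n := by
    intro n
    induction n with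
    | zero => rw [hL0, hR0]; exact ⟨le_refl 0, le_refl 1⟩
    | succ k ih =>
      have h1 : S.finv i1 (L k) ≤ 0 := le_trans (hfinv_le _ ih.1 i1) ih.1
      have h2 : 1 ≤ S.finv i1 (Rr k) := le_trans ih.2 (hfinv_ge _ ih.2 i1)
      rw [hLsucc, hRsucc]
      exact ⟨le_trans (hfinv_le _ h1 i0) h1, le_trans h2 (hfinv_ge _ h2 i0)⟩
  have hLdec : ∀ n, L (n + 1) ≤ L n - (1 - S.r i1) := by
    intro n
    have h1 : S.finv i1 (L n) ≤ L n - (1 - S.r i1) := by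
      have hb1' : S.b i1 = 1 - S.r i1 := by linarith [hi1]
      rw [finv, hb1', div_le_iff₀ (hr0 i1)]
      nlinarith [(hinv n).1, hr1 i1, hr0 i1]
    rw [hLsucc]
    calc S.finv i0 (S.finv i1 (L n)) ≤ S.finv i1 (L n) :=
          hfinv_le _ (le_trans h1 (by nlinarith [(hinv n).1, hr1 i1])) i0
      _ ≤ L n - (1 - S.r i1) := h1
  have hLmono : ∀ n, L (n + 1) ≤ L n := fun n =>
    le_trans (hLdec n) (by nlinarith [hr1 i1])
  have hLn : ∀ n, L n ≤ -(n : ℝ) * (1 - S.r i1) := by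
    intro n
    induction n with
    | zero => rw [hL0]; simp
    | succ k ih =>
      have := hLdec k
      push_cast
      push_cast at ih
      nlinarith [hr1 i1]
  have hRinc : ∀ n, Rr n / S.r i0 ≤ Rr (n + 1) := by
    intro n
    have h1 : Rr n ≤ S.finv i1 (Rr n) := hfinv_ge _ (hinv n).2 i1
    have h2 : Rr (n+1) = S.finv i1 (Rr n) / S.r i0 := by
      rw [hRsucc, finv, hi0, sub_zero]
    rw [h2]
    have := hr0 i0
    gcongr
  have hRmono : ∀ n, Rr n ≤ Rr (n + 1) := by
    intro n
    refine le_trans ?_ (hRinc n)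
    rw [le_div_iff₀ (hr0 i0)]
    nlinarith [(hinv n).2, hr1 i0, hr0 i0]
  have hRn : ∀ n, (1 / S.r i0) ^ n ≤ Rr n := by
    intro n
    induction n with
    | zero => rw [hR0]; simp
    | succ k ih =>
      have h3 : (1 / S.r i0) ^ k / S.r i0 ≤ Rr k / S.r i0 := by
        have := hr0 i0
        gcongr
      calc (1 / S.r i0) ^ (k+1) = (1 / S.r i0) ^ k / S.r i0 := by
            rw [pow_succ]
            field_simp
        _ ≤ Rr k / S.r i0 := h3
        _ ≤ Rr (k+1) := hRinc k
  have hconst : ∀ n, S.μ (Icc (L n) (Rr n)) = S.μ (Icc (0:ℝ) 1) := by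
    intro n
    induction n with
    | zero => rw [hL0, hR0]
    | succ k ih =>
      have s1 : S.finv i1 (L k) ≤ 0 := le_trans (hfinv_le _ (hinv k).1 i1) (hinv k).1
      have s2 : 1 ≤ S.finv i1 (Rr k) := le_trans (hinv k).2 (hfinv_ge _ (hinv k).2 i1)
      rw [hLsucc, hRsucc, S.step_measure s1 s2 i0, S.step_measure (hinv k).1 (hinv k).2 i1, ih]
  have hLanti : Antitone L := antitone_nat_of_succ_le hLmono
  have hRmono' : Monotone Rr := monotone_nat_of_le_succ hRmono
  have hmonoSet : Monotone (fun n => Icc (L n) (Rr n)) := by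
    intro n k hnk
    exact Icc_subset_Icc (hLanti hnk) (hRmono' hnk)
  have hunion : (⋃ n, Icc (L n) (Rr n)) = univ := by
    rw [eq_univ_iff_forall]
    intro x
    obtain ⟨n1, hn1⟩ := exists_nat_ge ((-x) / (1 - S.r i1))
    obtain ⟨n2, hn2⟩ := pow_unbounded_of_one_lt x (one_lt_one_div (hr0 i0) (hr1 i0))
    refine mem_iUnion.mpr ⟨max n1 n2, ?_, ?_⟩
    · refine le_trans (hLanti (le_max_left n1 n2)) (le_trans (hLn n1) ?_)
      rw [div_le_iff₀ (S.one_sub_r_pos i1)] at hn1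
      nlinarith
    · exact le_trans (le_trans hn2.le (hRn n2)) (hRmono' (le_max_right n1 n2))
  have hdir : Directed (· ⊆ ·) (fun n => Icc (L n) (Rr n)) := hmonoSet.directed_le
  have hfin := hdir.measure_iUnion (μ := S.μ)
  rw [hunion, measure_univ] at hfin
  simp only [hconst] at hfin
  rw [iSup_const] at hfin
  exact hfin.symm

lemma mu_outside : S.μ ((Icc (0:ℝ) 1)ᶜ) = 0 := by
  have h := measure_compl (μ := S.μ) (measurableSet_Icc (a := (0:ℝ)) (b := 1))
    (S.mu_ne_top _)
  rw [S.mu_Icc01, measure_univ] at h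
  simpa using h

lemma mu_null_of_disjoint {A : Set ℝ} (h : A ∩ Icc (0:ℝ) 1 = ∅) : S.μ A = 0 := by
  have hsub : A ⊆ (Icc (0:ℝ) 1)ᶜ := fun x hx hx2 =>
    (eq_empty_iff_forall_notMem.mp h x) ⟨hx, hx2⟩
  exact measure_mono_null hsub S.mu_outside

end IFSSetup
namespace IFSSetup
variable (S : IFSSetup)

lemma f_mem_base (i : Fin S.m) {x : ℝ} (hx : x ∈ Icc (0:ℝ) 1) :
    S.f i x ∈ Icc (S.b i) (S.b i + S.r i) := by
  simp only [f, mem_Icc] at *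
  constructor <;> nlinarith [S.hr0 i, hx.1, hx.2]

lemma base_subset (i : Fin S.m) : Icc (S.b i) (S.b i + S.r i) ⊆ Icc (0:ℝ) 1 :=
  Icc_subset_Icc (S.hb0 i) (S.hb1 i)

/-- the fundamental scaling property of `μ` -/
lemma mu_image (i : Fin S.m) {A : Set ℝ} (hA : MeasurableSet A) (hA1 : A ⊆ Icc (0:ℝ) 1) :
    S.μ ((S.f i) '' A) = ENNReal.ofReal (S.p i) * S.μ A := by
  have hiter := S.hiter ((S.f i) '' A) (S.f_image_measurable i hA)
  have hzero : ∀ j : Fin S.m, j ≠ i → S.μ ((S.f j) ⁻¹' ((S.f i) '' A)) = 0 := by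
    intro j hj
    apply S.mu_null_of_disjoint
    rw [eq_empty_iff_forall_notMem]
    rintro x ⟨⟨y, hy, hyx⟩, hx2⟩
    have h1 : S.f i y ∈ Icc (S.b i) (S.b i + S.r i) := S.f_mem_base i (hA1 hy)
    have h2 : S.f j x ∈ Icc (S.b j) (S.b j + S.r j) := S.f_mem_base j hx2
    rw [hyx] at h1
    rcases lt_or_gt_of_ne (fun h : (i:ℕ) = (j:ℕ) => hj (Fin.ext h.symm)) with h | h
    · have := S.horder i j h
      simp only [mem_Icc] at h1 h2
      linarith [h1.2, h2.1]
    · have := S.horder j i h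
      simp only [mem_Icc] at h1 h2
      linarith [h1.1, h2.2]
  have hf : ∀ j : Fin S.m, (fun x => S.b j + S.r j * x) = S.f j := fun j => rfl
  simp only [hf] at hiter
  rw [hiter, Finset.sum_eq_single i]
  · rw [preimage_image_eq A (S.f_mono i).injective]
  · intro j _ hj
    rw [hzero j hj, mul_zero]
  · intro h; exact absurd (Finset.mem_univ i) h

/-! ### constants -/

def rmin : ℝ := Finset.univ.inf' Finset.univ_nonempty S.r
def rmax : ℝ := Finset.univ.sup' Finset.univ_nonempty S.r
def pmin : ℝ := Finset.univ.inf' Finset.univ_nonempty S.p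

lemma rmin_pos : 0 < S.rmin := by
  obtain ⟨i, _, hi⟩ := Finset.exists_mem_eq_inf' (Finset.univ_nonempty) S.r
  rw [rmin, hi]; exact S.hr0 i

lemma rmin_le (i : Fin S.m) : S.rmin ≤ S.r i := Finset.inf'_le _ (Finset.mem_univ i)
lemma le_rmax (i : Fin S.m) : S.r i ≤ S.rmax := Finset.le_sup' _ (Finset.mem_univ i)

lemma rmax_lt_one : S.rmax < 1 := by
  obtain ⟨i, _, hi⟩ := Finset.exists_mem_eq_sup' (Finset.univ_nonempty) S.r
  rw [rmax, hi]; exact S.hr1 i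

lemma rmax_pos : 0 < S.rmax :=
  lt_of_lt_of_le (S.hr0 (Classical.arbitrary _)) (S.le_rmax _)

lemma rmin_le_rmax : S.rmin ≤ S.rmax :=
  le_trans (S.rmin_le (Classical.arbitrary _)) (S.le_rmax _)

lemma rmin_lt_one : S.rmin < 1 := lt_of_le_of_lt S.rmin_le_rmax S.rmax_lt_one

lemma pmin_pos : 0 < S.pmin := by
  obtain ⟨i, _, hi⟩ := Finset.exists_mem_eq_inf' (Finset.univ_nonempty) S.p
  rw [pmin, hi]; exact S.hp i

lemma pmin_le (i : Fin S.m) : S.pmin ≤ S.p i := Finset.inf'_le _ (Finset.mem_univ i)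

lemma pmin_le_one : S.pmin ≤ 1 := le_trans (S.pmin_le (Classical.arbitrary _)) (S.p_le_one _)

/-- the minimal gap between consecutive base intervals -/
def gapP : Finset (Fin S.m × Fin S.m) :=
  Finset.univ.filter (fun ij => (ij.1 : ℕ) < (ij.2 : ℕ))

lemma gapP_nonempty : S.gapP.Nonempty := by
  refine ⟨(⟨0, S.hmpos⟩, ⟨1, lt_of_lt_of_le one_lt_two S.hm⟩), ?_⟩
  simp [gapP]

def g : ℝ := S.gapP.inf' S.gapP_nonempty (fun ij => S.b ij.2 - (S.b ij.1 + S.r ij.1))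

lemma g_pos : 0 < S.g := by
  obtain ⟨ij, hmem, hij⟩ := Finset.exists_mem_eq_inf' S.gapP_nonempty
    (fun ij => S.b ij.2 - (S.b ij.1 + S.r ij.1))
  rw [g, hij]
  simp only [gapP, Finset.mem_filter] at hmem
  linarith [S.horder ij.1 ij.2 hmem.2]

lemma g_le {i j : Fin S.m} (h : (i:ℕ) < (j:ℕ)) : S.g ≤ S.b j - (S.b i + S.r i) := by
  have : (i, j) ∈ S.gapP := by
    simp only [gapP, Finset.mem_filter]
    exact ⟨Finset.mem_univ _, h⟩
  exact Finset.inf'_le (fun ij => S.b ij.2 - (S.b ij.1 + S.r ij.1)) this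

lemma g_lt_one : S.g < 1 := by
  obtain ⟨ij, hmem, hij⟩ := Finset.exists_mem_eq_inf' S.gapP_nonempty
    (fun ij => S.b ij.2 - (S.b ij.1 + S.r ij.1))
  rw [g, hij]
  have h1 := S.hb1 ij.2
  have h2 := S.hb0 ij.1
  have h3 := S.hr0 ij.1
  have h4 := S.hr0 ij.2
  linarith

/-! ### words and cylinders -/

def wr (w : List (Fin S.m)) : ℝ := (w.map S.r).prod
def wp (w : List (Fin S.m)) : ℝ := (w.map S.p).prod
def wf (w : List (Fin S.m)) : ℝ → ℝ := w.foldr (fun i g => S.f i ∘ g) id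

@[simp] lemma wr_nil : S.wr [] = 1 := rfl
@[simp] lemma wp_nil : S.wp [] = 1 := rfl
@[simp] lemma wf_nil : S.wf [] = id := rfl
@[simp] lemma wr_cons (i : Fin S.m) (w : List (Fin S.m)) :
    S.wr (i :: w) = S.r i * S.wr w := by simp [wr]
@[simp] lemma wp_cons (i : Fin S.m) (w : List (Fin S.m)) :
    S.wp (i :: w) = S.p i * S.wp w := by simp [wp]
@[simp] lemma wf_cons (i : Fin S.m) (w : List (Fin S.m)) :
    S.wf (i :: w) = S.f i ∘ S.wf w := rfl

lemma wr_append (u v : List (Fin S.m)) : S.wr (u ++ v) = S.wr u * S.wr v := by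
  simp [wr]
lemma wp_append (u v : List (Fin S.m)) : S.wp (u ++ v) = S.wp u * S.wp v := by
  simp [wp]

lemma wr_pos (w : List (Fin S.m)) : 0 < S.wr w := by
  induction w with
  | nil => norm_num
  | cons i w ih => rw [wr_cons]; exact mul_pos (S.hr0 i) ih

lemma wp_pos (w : List (Fin S.m)) : 0 < S.wp w := by
  induction w with
  | nil => norm_num
  | cons i w ih => rw [wp_cons]; exact mul_pos (S.hp i) ih

lemma wr_le_one (w : List (Fin S.m)) : S.wr w ≤ 1 := by
  induction w with
  | nil => norm_num
  | cons i w ih => rw [wr_cons]; nlinarith [S.hr0 i, S.hr1 i, S.wr_pos w]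

lemma wp_le_one (w : List (Fin S.m)) : S.wp w ≤ 1 := by
  induction w with
  | nil => norm_num
  | cons i w ih => rw [wp_cons]; nlinarith [S.hp i, S.p_le_one i, S.wp_pos w]

lemma wr_prefix {u w : List (Fin S.m)} (h : u <+: w) : S.wr w ≤ S.wr u := by
  obtain ⟨t, rfl⟩ := h
  rw [wr_append]
  nlinarith [S.wr_pos u, S.wr_pos t, S.wr_le_one t]

lemma wp_prefix {u w : List (Fin S.m)} (h : u <+: w) : S.wp w ≤ S.wp u := by
  obtain ⟨t, rfl⟩ := h
  rw [wp_append]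
  nlinarith [S.wp_pos u, S.wp_pos t, S.wp_le_one t]

lemma wr_pow_le (w : List (Fin S.m)) : S.wr w ≤ S.rmax ^ w.length := by
  induction w with
  | nil => simp
  | cons i w ih =>
    rw [wr_cons, List.length_cons, pow_succ]
    rw [mul_comm (S.rmax ^ w.length) S.rmax]
    exact mul_le_mul (S.le_rmax i) ih (S.wr_pos w).le S.rmax_pos.le

lemma pmin_pow_le_wp (w : List (Fin S.m)) : S.pmin ^ w.length ≤ S.wp w := by
  induction w with
  | nil => simp
  | cons i w ih =>
    rw [wp_cons, List.length_cons, pow_succ, mul_comm (S.pmin ^ w.length) S.pmin]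
    exact mul_le_mul (S.pmin_le i) ih (pow_nonneg S.pmin_pos.le _) (S.hp i).le

lemma wf_affine (w : List (Fin S.m)) (x : ℝ) : S.wf w x = S.wf w 0 + S.wr w * x := by
  induction w with
  | nil => simp
  | cons i w ih =>
    simp only [wf_cons, Function.comp_apply, wr_cons, f]
    rw [ih]
    ring

def cyl (w : List (Fin S.m)) : Set ℝ := Icc (S.wf w 0) (S.wf w 1)

lemma wf_le (w : List (Fin S.m)) : S.wf w 0 ≤ S.wf w 1 := by
  rw [S.wf_affine w 1]
  nlinarith [S.wr_pos w]

lemma wf_diff (w : List (Fin S.m)) : S.wf w 1 - S.wf w 0 = S.wr w := by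
  rw [S.wf_affine w 1]; ring

@[simp] lemma cyl_nil : S.cyl [] = Icc (0:ℝ) 1 := by simp [cyl]

lemma cyl_cons (i : Fin S.m) (w : List (Fin S.m)) :
    S.cyl (i :: w) = (S.f i) '' S.cyl w := by
  rw [cyl, cyl, S.f_image_Icc i _ _]
  rfl

lemma cyl_subset (w : List (Fin S.m)) : S.cyl w ⊆ Icc (0:ℝ) 1 := by
  induction w with
  | nil => simp
  | cons i w ih =>
    rw [cyl_cons]
    refine subset_trans (image_mono ih) ?_
    rw [S.f_image_Icc]
    refine subset_trans (Icc_subset_Icc le_rfl le_rfl) ?_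
    have h0 : S.f i 0 = S.b i := by simp [f]
    have h1 : S.f i 1 = S.b i + S.r i := by simp [f]
    rw [h0, h1]
    exact S.base_subset i

lemma cyl_measurable (w : List (Fin S.m)) : MeasurableSet (S.cyl w) := measurableSet_Icc

lemma mu_cyl (w : List (Fin S.m)) : S.μ (S.cyl w) = ENNReal.ofReal (S.wp w) := by
  induction w with
  | nil => rw [cyl_nil, S.mu_Icc01]; simp
  | cons i w ih =>
    rw [cyl_cons, S.mu_image i (S.cyl_measurable w) (S.cyl_subset w), ih,
      ← ENNReal.ofReal_mul (S.hp i).le, wp_cons]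

end IFSSetup
namespace IFSSetup
variable (S : IFSSetup)

lemma cyl_cons_subset_base (i : Fin S.m) (w : List (Fin S.m)) :
    S.cyl (i :: w) ⊆ Icc (S.b i) (S.b i + S.r i) := by
  rw [cyl_cons]
  intro x ⟨y, hy, hyx⟩
  rw [← hyx]
  exact S.f_mem_base i (S.cyl_subset w hy)

lemma f_dist (i : Fin S.m) (x y : ℝ) : |S.f i x - S.f i y| = S.r i * |x - y| := by
  simp only [f]
  rw [show S.b i + S.r i * x - (S.b i + S.r i * y) = S.r i * (x - y) by ring,
    abs_mul, abs_of_pos (S.hr0 i)]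

/-- separation of cylinders over incomparable words -/
lemma sep : ∀ w v : List (Fin S.m), ¬ (w <+: v) → ¬ (v <+: w) →
    ∃ u, u <+: w ∧ u <+: v ∧ u ≠ w ∧ u ≠ v ∧
      ∀ x ∈ S.cyl w, ∀ y ∈ S.cyl v, S.g * S.wr u ≤ |x - y| := by
  intro w
  induction w with
  | nil => intro v hw _; exact absurd (List.nil_prefix) hw
  | cons i w' ih =>
    intro v hw hv
    match v with
    | [] => exact absurd (List.nil_prefix) hv
    | j :: v' =>
      by_cases hij : i = j
      · subst hij
        have hw' : ¬ (w' <+: v') := fun h => hw (List.cons_prefix_cons.mpr ⟨rfl, h⟩)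
        have hv' : ¬ (v' <+: w') := fun h => hv (List.cons_prefix_cons.mpr ⟨rfl, h⟩)
        obtain ⟨u', h1, h2, h3, h4, h5⟩ := ih v' hw' hv'
        refine ⟨i :: u', List.cons_prefix_cons.mpr ⟨rfl, h1⟩,
          List.cons_prefix_cons.mpr ⟨rfl, h2⟩,
          fun h => h3 (by injection h), fun h => h4 (by injection h), ?_⟩
        intro x hx y hy
        rw [cyl_cons] at hx hy
        obtain ⟨x', hx', rfl⟩ := hx
        obtain ⟨y', hy', rfl⟩ := hy
        rw [S.f_dist, wr_cons]
        calc S.g * (S.r i * S.wr u') = S.r i * (S.g * S.wr u') := by ring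
          _ ≤ S.r i * |x' - y'| :=
            mul_le_mul_of_nonneg_left (h5 x' hx' y' hy') (S.hr0 i).le
      · refine ⟨[], List.nil_prefix, List.nil_prefix, by simp, by simp, ?_⟩
        intro x hx y hy
        have hx2 := S.cyl_cons_subset_base i w' hx
        have hy2 := S.cyl_cons_subset_base j v' hy
        simp only [mem_Icc] at hx2 hy2
        rw [wr_nil, mul_one]
        rcases lt_or_gt_of_ne (fun h : (i:ℕ) = (j:ℕ) => hij (Fin.ext h)) with h | h
        · have hg := S.g_le h
          rw [abs_sub_comm, abs_of_nonneg (by linarith [hx2.2, hy2.1, S.g_pos] : (0:ℝ) ≤ y - x)]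
          linarith [hx2.2, hy2.1]
        · have hg := S.g_le h
          rw [abs_of_nonneg (by linarith [hy2.2, hx2.1, S.g_pos] : (0:ℝ) ≤ x - y)]
          linarith [hy2.2, hx2.1]

end IFSSetup
namespace IFSSetup
variable (S : IFSSetup)

def stopF : ℕ → ℝ → Finset (List (Fin S.m))
  | 0, _ => ∅
  | n + 1, R => Finset.univ.biUnion fun i =>
      if S.r i ≤ R then {[i]} else (stopF n (R / S.r i)).image (List.cons i)

def Stopped (R : ℝ) (w : List (Fin S.m)) : Prop :=
  S.wr w ≤ R ∧ ∀ u, u <+: w → u ≠ w → R < S.wr u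

lemma stopF_head {n : ℕ} {R : ℝ} {i : Fin S.m} {w : List (Fin S.m)}
    (h : w ∈ (if S.r i ≤ R then {[i]} else (S.stopF n (R / S.r i)).image (List.cons i))) :
    ∃ t, w = i :: t := by
  split_ifs at h
  · simp only [Finset.mem_singleton] at h; exact ⟨[], h⟩
  · simp only [Finset.mem_image] at h; obtain ⟨t, _, rfl⟩ := h; exact ⟨t, rfl⟩

lemma stopF_pairwise (n : ℕ) (R : ℝ) :
    ((Finset.univ : Finset (Fin S.m)) : Set (Fin S.m)).PairwiseDisjoint
      (fun i => if S.r i ≤ R then {[i]} else (S.stopF n (R / S.r i)).image (List.cons i)) := by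
  intro i _ j _ hij
  simp only [Function.onFun]
  rw [Finset.disjoint_left]
  intro w hwi hwj
  obtain ⟨t1, rfl⟩ := S.stopF_head hwi
  obtain ⟨t2, ht2⟩ := S.stopF_head hwj
  exact hij (by injection ht2)

lemma rdiv_bound {n : ℕ} {R : ℝ} (hR1 : R < 1) (hpow : S.rmax ^ (n + 1) ≤ R)
    {i : Fin S.m} (hi : ¬ S.r i ≤ R) :
    0 < R / S.r i ∧ R / S.r i < 1 ∧ S.rmax ^ n ≤ R / S.r i := by
  have h0 := S.hr0 i
  have hRpos : 0 < R := lt_of_lt_of_le (pow_pos S.rmax_pos _) hpow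
  refine ⟨div_pos hRpos h0, (div_lt_one h0).mpr (not_le.mp hi), ?_⟩
  rw [le_div_iff₀ h0]
  calc S.rmax ^ n * S.r i ≤ S.rmax ^ n * S.rmax :=
        mul_le_mul_of_nonneg_left (S.le_rmax i) (pow_nonneg S.rmax_pos.le n)
    _ = S.rmax ^ (n + 1) := by rw [pow_succ]
    _ ≤ R := hpow

lemma mem_stopF : ∀ (n : ℕ) (R : ℝ), 0 < R → R < 1 → S.rmax ^ n ≤ R →
    ∀ w, w ∈ S.stopF (n + 1) R ↔ S.Stopped R w := by
  intro n
  induction n with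
  | zero =>
    intro R h0 h1 hpow
    exact absurd (lt_of_lt_of_le h1 (by simpa using hpow)) (lt_irrefl R)
  | succ n ih =>
    intro R h0 h1 hpow w
    constructor
    · intro hw
      rw [stopF, Finset.mem_biUnion] at hw
      obtain ⟨i, _, hi⟩ := hw
      by_cases hri : S.r i ≤ R
      · rw [if_pos hri, Finset.mem_singleton] at hi
        subst hi
        refine ⟨by simpa using hri, ?_⟩
        intro u hu hne
        have hu0 : u = [] := by
          obtain ⟨t, ht⟩ := hu
          cases u with
          | nil => rfl
          | cons a u' =>
            exfalso
            injection ht with ha hb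
            obtain ⟨h3, _⟩ := List.append_eq_nil_iff.mp hb
            exact hne (by rw [ha, h3])
        subst hu0
        simpa using h1
      · rw [if_neg hri, Finset.mem_image] at hi
        obtain ⟨w', hw', rfl⟩ := hi
        obtain ⟨hd0, hd1, hd2⟩ := S.rdiv_bound h1 hpow hri
        have hst := (ih (R / S.r i) hd0 hd1 hd2 w').mp hw'
        constructor
        · rw [wr_cons]
          calc S.r i * S.wr w' ≤ S.r i * (R / S.r i) :=
              mul_le_mul_of_nonneg_left hst.1 (S.hr0 i).le
            _ = R := by rw [mul_comm, div_mul_cancel₀ _ (S.hr0 i).ne']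
        · intro u hu hne
          cases u with
          | nil => simpa using h1
          | cons k u' =>
            obtain ⟨hk, hu'⟩ := List.cons_prefix_cons.mp hu
            have hne' : u' ≠ w' := fun h => hne (by rw [hk, h])
            have h5 := hst.2 u' hu' hne'
            rw [div_lt_iff₀ (S.hr0 i)] at h5
            rw [wr_cons, hk]
            linarith [h5, mul_comm (S.wr u') (S.r i)]
    · intro hst
      cases w with
      | nil =>
        exfalso
        have h2 := hst.1
        rw [wr_nil] at h2
        linarith
      | cons i w' =>
        rw [stopF, Finset.mem_biUnion]
        refine ⟨i, Finset.mem_univ i, ?_⟩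
        by_cases hri : S.r i ≤ R
        · rw [if_pos hri, Finset.mem_singleton]
          by_contra hne
          have hw' : w' ≠ [] := fun h => hne (by rw [h])
          have hpre : [i] <+: i :: w' := List.cons_prefix_cons.mpr ⟨rfl, List.nil_prefix⟩
          have hne2 : [i] ≠ i :: w' := by
            intro h
            injection h with h1 h2
            exact hw' h2.symm
          have := hst.2 [i] hpre hne2
          rw [show S.wr [i] = S.r i by simp] at this
          linarith
        · rw [if_neg hri, Finset.mem_image]
          obtain ⟨hd0, hd1, hd2⟩ := S.rdiv_bound h1 hpow hri
          refine ⟨w', ?_, rfl⟩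
          rw [ih (R / S.r i) hd0 hd1 hd2 w']
          constructor
          · rw [le_div_iff₀ (S.hr0 i)]
            have := hst.1
            rw [wr_cons] at this
            linarith [this, mul_comm (S.r i) (S.wr w')]
          · intro u' hu' hne'
            have hpre : i :: u' <+: i :: w' := List.cons_prefix_cons.mpr ⟨rfl, hu'⟩
            have hne2 : i :: u' ≠ i :: w' := fun h => hne' (by injection h)
            have h5 := hst.2 (i :: u') hpre hne2
            rw [wr_cons] at h5
            rw [div_lt_iff₀ (S.hr0 i)]
            linarith [h5, mul_comm (S.r i) (S.wr u')]

end IFSSetup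
namespace IFSSetup
variable (S : IFSSetup)

lemma stopF_sum (f : Fin S.m → ℝ) (hf : ∑ i, f i = 1) :
    ∀ (n : ℕ) (R : ℝ), 0 < R → R < 1 → S.rmax ^ n ≤ R →
      ∑ w ∈ S.stopF (n + 1) R, (w.map f).prod = 1 := by
  intro n
  induction n with
  | zero =>
    intro R h0 h1 hpow
    exact absurd (lt_of_lt_of_le h1 (by simpa using hpow)) (lt_irrefl R)
  | succ n ih =>
    intro R h0 h1 hpow
    rw [stopF, Finset.sum_biUnion (S.stopF_pairwise (n+1) R)]
    have hterm : ∀ i : Fin S.m,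
        ∑ w ∈ (if S.r i ≤ R then {[i]} else
          (S.stopF (n+1) (R / S.r i)).image (List.cons i)), (w.map f).prod = f i := by
      intro i
      by_cases hri : S.r i ≤ R
      · rw [if_pos hri, Finset.sum_singleton]
        simp
      · rw [if_neg hri]
        rw [Finset.sum_image (fun _ _ _ _ h => by injection h)]
        obtain ⟨hd0, hd1, hd2⟩ := S.rdiv_bound h1 hpow hri
        have := ih (R / S.r i) hd0 hd1 hd2
        calc ∑ w ∈ S.stopF (n+1) (R / S.r i), ((i :: w).map f).prod
            = ∑ w ∈ S.stopF (n+1) (R / S.r i), f i * (w.map f).prod := by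
              apply Finset.sum_congr rfl
              intro w _
              simp
          _ = f i * ∑ w ∈ S.stopF (n+1) (R / S.r i), (w.map f).prod := by
              rw [Finset.mul_sum]
          _ = f i := by rw [this, mul_one]
    rw [Finset.sum_congr rfl (fun i _ => hterm i)]
    exact hf

/-- fuel for the stopping construction -/
def NR (R : ℝ) : ℕ := Nat.ceil (Real.log R / Real.log S.rmax)

lemma rmax_pow_NR {R : ℝ} (h0 : 0 < R) (h1 : R < 1) : S.rmax ^ S.NR R ≤ R := by
  have hlog : Real.log S.rmax < 0 := Real.log_neg S.rmax_pos S.rmax_lt_one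
  have h2 : Real.log R / Real.log S.rmax ≤ (S.NR R : ℝ) := Nat.le_ceil _
  have h3 : (S.NR R : ℝ) * Real.log S.rmax ≤ Real.log R := by
    rw [← div_mul_cancel₀ (Real.log R) hlog.ne]
    exact mul_le_mul_of_nonpos_right h2 hlog.le
  have h4 : Real.log (S.rmax ^ S.NR R) ≤ Real.log R := by
    rw [Real.log_pow]; exact_mod_cast h3
  exact (Real.log_le_log_iff (pow_pos S.rmax_pos _) h0).mp h4

/-- the stopping family at scale `R` -/
def SF (R : ℝ) : Finset (List (Fin S.m)) := S.stopF (S.NR R + 1) R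

lemma mem_SF {R : ℝ} (h0 : 0 < R) (h1 : R < 1) (w : List (Fin S.m)) :
    w ∈ S.SF R ↔ S.Stopped R w :=
  S.mem_stopF (S.NR R) R h0 h1 (S.rmax_pow_NR h0 h1) w

lemma SF_sum (f : Fin S.m → ℝ) (hf : ∑ i, f i = 1) {R : ℝ} (h0 : 0 < R) (h1 : R < 1) :
    ∑ w ∈ S.SF R, (w.map f).prod = 1 :=
  S.stopF_sum f hf (S.NR R) R h0 h1 (S.rmax_pow_NR h0 h1)

lemma SF_wr_le {R : ℝ} (h0 : 0 < R) (h1 : R < 1) {w : List (Fin S.m)} (hw : w ∈ S.SF R) :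
    S.wr w ≤ R := ((S.mem_SF h0 h1 w).mp hw).1

lemma SF_ne_nil {R : ℝ} (h0 : 0 < R) (h1 : R < 1) {w : List (Fin S.m)} (hw : w ∈ S.SF R) :
    w ≠ [] := by
  intro h
  have h2 := ((S.mem_SF h0 h1 w).mp hw).1
  rw [h, wr_nil] at h2
  linarith

lemma SF_wr_gt {R : ℝ} (h0 : 0 < R) (h1 : R < 1) {w : List (Fin S.m)} (hw : w ∈ S.SF R) :
    S.rmin * R < S.wr w := by
  have hst := (S.mem_SF h0 h1 w).mp hw
  have hne := S.SF_ne_nil h0 h1 hw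
  have hpre : w.dropLast <+: w := List.dropLast_prefix w
  have hneq : w.dropLast ≠ w := by
    intro h
    have h2 := congrArg List.length h
    rw [List.length_dropLast] at h2
    cases w with
    | nil => exact hne rfl
    | cons a l => simp at h2
  have h2 := hst.2 _ hpre hneq
  have h3 : S.wr w = S.wr w.dropLast * S.r (w.getLast hne) := by
    conv_lhs => rw [← List.dropLast_append_getLast hne]
    rw [wr_append]
    simp [wr]
  rw [h3]
  nlinarith [S.rmin_le (w.getLast hne), h2, S.hr0 (w.getLast hne), S.rmin_pos, h0,
    S.rmin_lt_one]

lemma SF_sep {R : ℝ} (h0 : 0 < R) (h1 : R < 1) {w v : List (Fin S.m)}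
    (hw : w ∈ S.SF R) (hv : v ∈ S.SF R) (hne : w ≠ v) :
    ∀ x ∈ S.cyl w, ∀ y ∈ S.cyl v, S.g * R ≤ |x - y| := by
  have hsw := (S.mem_SF h0 h1 w).mp hw
  have hsv := (S.mem_SF h0 h1 v).mp hv
  have hnp : ¬ w <+: v := by
    intro hp
    have := hsv.2 w hp hne
    linarith [hsw.1]
  have hnp' : ¬ v <+: w := by
    intro hp
    have := hsw.2 v hp (Ne.symm hne)
    linarith [hsv.1]
  obtain ⟨u, hu1, _, hu3, _, h5⟩ := S.sep w v hnp hnp'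
  have hgt : R < S.wr u := hsw.2 u hu1 hu3
  intro x hx y hy
  calc S.g * R ≤ S.g * S.wr u := by nlinarith [S.g_pos]
    _ ≤ |x - y| := h5 x hx y hy

lemma SF_disjoint {R : ℝ} (h0 : 0 < R) (h1 : R < 1) :
    (↑(S.SF R) : Set (List (Fin S.m))).PairwiseDisjoint S.cyl := by
  intro w hw v hv hne
  simp only [Function.onFun]
  rw [Set.disjoint_left]
  intro x hxw hxv
  have := S.SF_sep h0 h1 (Finset.mem_coe.mp hw) (Finset.mem_coe.mp hv) hne x hxw x hxv
  simp only [sub_self, abs_zero] at this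
  nlinarith [S.g_pos]

lemma mu_SF_union {R : ℝ} (h0 : 0 < R) (h1 : R < 1) :
    S.μ (⋃ w ∈ S.SF R, S.cyl w) = 1 := by
  rw [measure_biUnion_finset (S.SF_disjoint h0 h1) (fun w _ => S.cyl_measurable w)]
  have h2 : ∀ w ∈ S.SF R, S.μ (S.cyl w) = ENNReal.ofReal (S.wp w) :=
    fun w _ => S.mu_cyl w
  rw [Finset.sum_congr rfl h2, ← ENNReal.ofReal_sum_of_nonneg
    (fun w _ => (S.wp_pos w).le)]
  have h3 : ∑ w ∈ S.SF R, S.wp w = 1 := S.SF_sum S.p S.hpsum h0 h1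
  rw [h3, ENNReal.ofReal_one]

lemma mu_SF_compl {R : ℝ} (h0 : 0 < R) (h1 : R < 1) :
    S.μ ((⋃ w ∈ S.SF R, S.cyl w)ᶜ) = 0 := by
  have hms : MeasurableSet (⋃ w ∈ S.SF R, S.cyl w) :=
    (S.SF R).measurableSet_biUnion (fun w _ => S.cyl_measurable w)
  have h := measure_compl hms (S.mu_ne_top _)
  rw [S.mu_SF_union h0 h1, measure_univ] at h
  simpa using h

lemma exists_SF_pos {R : ℝ} (h0 : 0 < R) (h1 : R < 1) {A : Set ℝ}
    (hApos : 0 < S.μ A) : ∃ w ∈ S.SF R, 0 < S.μ (A ∩ S.cyl w) := by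
  by_contra hcon
  push_neg at hcon
  have hz : ∀ w ∈ S.SF R, S.μ (A ∩ S.cyl w) = 0 :=
    fun w hw => le_antisymm (hcon w hw) zero_le
  set U := ⋃ w ∈ S.SF R, S.cyl w with hU
  have h2 : S.μ (A ∩ U) = 0 := by
    have : A ∩ U = ⋃ w ∈ S.SF R, A ∩ S.cyl w := by
      rw [hU, inter_iUnion₂]
    rw [this]
    refine le_antisymm (le_trans (measure_biUnion_finset_le _ _) ?_) zero_le
    rw [Finset.sum_congr rfl hz]
    simp
  have h3 : S.μ (A \ U) = 0 :=
    measure_mono_null (diff_subset_compl A U) (S.mu_SF_compl h0 h1)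
  have h4 := measure_le_inter_add_diff S.μ A U
  rw [h2, h3] at h4
  simp only [add_zero, le_zero_iff] at h4
  exact absurd h4 hApos.ne'

lemma prod_rpow (q β : ℝ) (w : List (Fin S.m)) :
    (w.map fun i => S.p i ^ q * S.r i ^ β).prod = S.wp w ^ q * S.wr w ^ β := by
  induction w with
  | nil => simp [Real.one_rpow]
  | cons i w ih =>
    simp only [List.map_cons, List.prod_cons, wp_cons, wr_cons, ih]
    rw [Real.mul_rpow (S.hp i).le (S.wp_pos w).le,
      Real.mul_rpow (S.hr0 i).le (S.wr_pos w).le]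
    ring

end IFSSetup
section Counting

lemma floor_sep {s x y : ℝ} (hs : 0 < s) (hxy : s ≤ |x - y|) :
    ⌊x / s⌋ ≠ ⌊y / s⌋ := by
  rcases abs_cases (x - y) with ⟨h1, _⟩ | ⟨h1, _⟩
  · -- x - y ≥ 0, so y + s ≤ x
    have h2 : y / s + 1 ≤ x / s := by
      rw [← sub_nonneg, show x / s - (y / s + 1) = (x - y - s) / s by field_simp; ring]
      apply div_nonneg _ hs.le
      linarith
    intro h
    have h3 : ⌊y / s⌋ + 1 ≤ ⌊x / s⌋ := by
      rw [← Int.floor_add_one]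
      exact Int.floor_le_floor h2
    omega
  · have h2 : x / s + 1 ≤ y / s := by
      rw [← sub_nonneg, show y / s - (x / s + 1) = (y - x - s) / s by field_simp; ring]
      apply div_nonneg _ hs.le
      linarith
    intro h
    have h3 : ⌊x / s⌋ + 1 ≤ ⌊y / s⌋ := by
      rw [← Int.floor_add_one]
      exact Int.floor_le_floor h2
    omega

lemma card_le_of_int_embed {α : Type*} (s : Finset α) (φ : α → ℤ) (A B : ℝ)
    (hinj : Set.InjOn φ s) (hAB : A ≤ B)
    (hrange : ∀ x ∈ s, A ≤ (φ x : ℝ) ∧ (φ x : ℝ) ≤ B) :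
    (s.card : ℝ) ≤ B - A + 1 := by
  have hsub : ∀ x ∈ s, φ x ∈ Finset.Icc ⌈A⌉ ⌊B⌋ := by
    intro x hx
    rw [Finset.mem_Icc]
    exact ⟨Int.ceil_le.mpr (hrange x hx).1, Int.le_floor.mpr (hrange x hx).2⟩
  have hcard : s.card ≤ (Finset.Icc ⌈A⌉ ⌊B⌋).card :=
    Finset.card_le_card_of_injOn φ hsub hinj
  rw [Int.card_Icc] at hcard
  have h2 : ((⌊B⌋ + 1 - ⌈A⌉).toNat : ℝ) ≤ B - A + 1 := by
    rcases le_or_gt (⌊B⌋ + 1 - ⌈A⌉) 0 with h | h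
    · rw [Int.toNat_of_nonpos h]
      push_cast
      linarith
    · have h4 : ((⌊B⌋ + 1 - ⌈A⌉).toNat : ℝ) = ((⌊B⌋ : ℝ) + 1 - ⌈A⌉) := by
        rw [show ((⌊B⌋ + 1 - ⌈A⌉).toNat : ℝ) = (((⌊B⌋ + 1 - ⌈A⌉).toNat : ℤ) : ℝ) by push_cast; ring,
          Int.toNat_of_nonneg h.le]
        push_cast
        ring
      rw [h4]
      linarith [Int.floor_le B, Int.le_ceil A]
  calc (s.card : ℝ) ≤ ((⌊B⌋ + 1 - ⌈A⌉).toNat : ℝ) := by exact_mod_cast hcard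
    _ ≤ B - A + 1 := h2

end Counting

namespace IFSSetup
variable (S : IFSSetup)

/-! ### moment sums over the stopping family -/

def Kb (β : ℝ) : ℝ := max 1 (S.rmin ^ (-β))
def kb (β : ℝ) : ℝ := min 1 (S.rmin ^ (-β))

lemma Kb_pos (β : ℝ) : 0 < S.Kb β := lt_of_lt_of_le one_pos (le_max_left _ _)
lemma kb_pos (β : ℝ) : 0 < S.kb β :=
  lt_min one_pos (Real.rpow_pos_of_pos S.rmin_pos _)

lemma rpow_interval_le {a x b e : ℝ} (ha : 0 < a) (hax : a ≤ x) (hxb : x ≤ b) :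
    x ^ e ≤ max (a ^ e) (b ^ e) := by
  rcases le_or_gt 0 e with he | he
  · exact le_trans (Real.rpow_le_rpow (by linarith) hxb he) (le_max_right _ _)
  · exact le_trans (Real.rpow_le_rpow_of_nonpos ha hax he.le) (le_max_left _ _)

lemma rpow_interval_ge {a x b e : ℝ} (ha : 0 < a) (hax : a ≤ x) (hxb : x ≤ b) :
    min (a ^ e) (b ^ e) ≤ x ^ e := by
  rcases le_or_gt 0 e with he | he
  · exact le_trans (min_le_left _ _) (Real.rpow_le_rpow ha.le hax he)
  · exact le_trans (min_le_right _ _)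
      (Real.rpow_le_rpow_of_nonpos (lt_of_lt_of_le ha hax) hxb he.le)

lemma SF_wr_rpow_le {R β : ℝ} (h0 : 0 < R) (h1 : R < 1) {w : List (Fin S.m)}
    (hw : w ∈ S.SF R) : S.wr w ^ (-β) ≤ S.Kb β * R ^ (-β) := by
  have hlo : S.rmin * R ≤ S.wr w := (S.SF_wr_gt h0 h1 hw).le
  have hhi : S.wr w ≤ R := S.SF_wr_le h0 h1 hw
  have h2 := rpow_interval_le (mul_pos S.rmin_pos h0) hlo hhi (e := -β)
  have h3 : (S.rmin * R) ^ (-β) = S.rmin ^ (-β) * R ^ (-β) :=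
    Real.mul_rpow S.rmin_pos.le h0.le
  rw [h3] at h2
  calc S.wr w ^ (-β) ≤ max (S.rmin ^ (-β) * R ^ (-β)) (R ^ (-β)) := h2
    _ = max (S.rmin ^ (-β) * R ^ (-β)) (1 * R ^ (-β)) := by rw [one_mul]
    _ = max (S.rmin ^ (-β)) 1 * R ^ (-β) := by
        rw [max_mul_of_nonneg _ _ (Real.rpow_nonneg h0.le _)]
    _ = S.Kb β * R ^ (-β) := by rw [Kb, max_comm]

lemma SF_wr_rpow_ge {R β : ℝ} (h0 : 0 < R) (h1 : R < 1) {w : List (Fin S.m)}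
    (hw : w ∈ S.SF R) : S.kb β * R ^ (-β) ≤ S.wr w ^ (-β) := by
  have hlo : S.rmin * R ≤ S.wr w := (S.SF_wr_gt h0 h1 hw).le
  have hhi : S.wr w ≤ R := S.SF_wr_le h0 h1 hw
  have h2 := rpow_interval_ge (mul_pos S.rmin_pos h0) hlo hhi (e := -β)
  have h3 : (S.rmin * R) ^ (-β) = S.rmin ^ (-β) * R ^ (-β) :=
    Real.mul_rpow S.rmin_pos.le h0.le
  rw [h3] at h2
  refine le_trans (le_of_eq ?_) h2
  rw [kb, min_mul_of_nonneg _ _ (Real.rpow_nonneg h0.le _), one_mul, min_comm]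

lemma wp_q_decomp (q β : ℝ) (w : List (Fin S.m)) :
    S.wp w ^ q = (S.wp w ^ q * S.wr w ^ β) * S.wr w ^ (-β) := by
  rw [mul_assoc, ← Real.rpow_add (S.wr_pos w), add_neg_cancel, Real.rpow_zero, mul_one]

lemma term_nonneg_pq (q β : ℝ) (w : List (Fin S.m)) : 0 ≤ S.wp w ^ q * S.wr w ^ β :=
  mul_nonneg (Real.rpow_nonneg (S.wp_pos w).le _) (Real.rpow_nonneg (S.wr_pos w).le _)

lemma SF_sum_wpq_le {q β R : ℝ} (hβ : ∑ i, S.p i ^ q * S.r i ^ β = 1)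
    (h0 : 0 < R) (h1 : R < 1) :
    ∑ w ∈ S.SF R, S.wp w ^ q ≤ S.Kb β * R ^ (-β) := by
  have hsum : ∑ w ∈ S.SF R, S.wp w ^ q * S.wr w ^ β = 1 := by
    have := S.SF_sum (fun i => S.p i ^ q * S.r i ^ β) hβ h0 h1
    rw [Finset.sum_congr rfl (fun w _ => S.prod_rpow q β w)] at this
    exact this
  calc ∑ w ∈ S.SF R, S.wp w ^ q
      = ∑ w ∈ S.SF R, (S.wp w ^ q * S.wr w ^ β) * S.wr w ^ (-β) :=
        Finset.sum_congr rfl (fun w _ => S.wp_q_decomp q β w)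
    _ ≤ ∑ w ∈ S.SF R, (S.wp w ^ q * S.wr w ^ β) * (S.Kb β * R ^ (-β)) := by
        refine Finset.sum_le_sum (fun w hw => ?_)
        exact mul_le_mul_of_nonneg_left (S.SF_wr_rpow_le h0 h1 hw) (S.term_nonneg_pq q β w)
    _ = (∑ w ∈ S.SF R, S.wp w ^ q * S.wr w ^ β) * (S.Kb β * R ^ (-β)) := by
        rw [Finset.sum_mul]
    _ = S.Kb β * R ^ (-β) := by rw [hsum, one_mul]

lemma SF_sum_wpq_ge {q β R : ℝ} (hβ : ∑ i, S.p i ^ q * S.r i ^ β = 1)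
    (h0 : 0 < R) (h1 : R < 1) :
    S.kb β * R ^ (-β) ≤ ∑ w ∈ S.SF R, S.wp w ^ q := by
  have hsum : ∑ w ∈ S.SF R, S.wp w ^ q * S.wr w ^ β = 1 := by
    have := S.SF_sum (fun i => S.p i ^ q * S.r i ^ β) hβ h0 h1
    rw [Finset.sum_congr rfl (fun w _ => S.prod_rpow q β w)] at this
    exact this
  calc S.kb β * R ^ (-β)
      = (∑ w ∈ S.SF R, S.wp w ^ q * S.wr w ^ β) * (S.kb β * R ^ (-β)) := by
        rw [hsum, one_mul]
    _ = ∑ w ∈ S.SF R, (S.wp w ^ q * S.wr w ^ β) * (S.kb β * R ^ (-β)) := by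
        rw [Finset.sum_mul]
    _ ≤ ∑ w ∈ S.SF R, (S.wp w ^ q * S.wr w ^ β) * S.wr w ^ (-β) := by
        refine Finset.sum_le_sum (fun w hw => ?_)
        exact mul_le_mul_of_nonneg_left (S.SF_wr_rpow_ge h0 h1 hw) (S.term_nonneg_pq q β w)
    _ = ∑ w ∈ S.SF R, S.wp w ^ q :=
        Finset.sum_congr rfl (fun w _ => (S.wp_q_decomp q β w).symm)

end IFSSetup
section Grid

/-- the grid interval `[kR, (k+1)R]` -/
def Bk (R : ℝ) (k : ℤ) : Set ℝ := Set.Icc ((k : ℝ) * R) (((k : ℝ) + 1) * R)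

/-- the enlarged grid interval -/
def Bek (a R : ℝ) (k : ℤ) : Set ℝ :=
  Set.Icc ((k : ℝ) * R - a * R / 2) (((k : ℝ) + 1) * R + a * R / 2)

lemma Bek_zero (R : ℝ) (k : ℤ) : Bek 0 R k = Bk R k := by
  simp [Bek, Bk]

lemma Bk_subset_Bek {a : ℝ} (ha : 0 ≤ a) (R : ℝ) (hR : 0 ≤ R) (k : ℤ) :
    Bk R k ⊆ Bek a R k := by
  apply Icc_subset_Icc <;> nlinarith [mul_nonneg ha hR]

lemma enlarge_eq (a R : ℝ) (k : ℤ) :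
    enlarge a ((k : ℝ) * R) (((k : ℝ) + 1) * R) = Bek a R k := by
  ext x
  simp only [enlarge, Bek, mem_Icc]
  constructor <;> intro h <;> constructor <;> nlinarith [h.1, h.2]

/-- the summand of `gridSum` -/
def gterm (μ : Measure ℝ) (a q R : ℝ) (k : ℤ) : ℝ :=
  if 0 < μ (Bk R k) then (μ (Bek a R k)).toReal ^ q else 0

lemma gterm_nonneg (μ : Measure ℝ) (a q R : ℝ) (k : ℤ) : 0 ≤ gterm μ a q R k := by
  unfold gterm
  split_ifs
  · exact Real.rpow_nonneg ENNReal.toReal_nonneg q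
  · exact le_rfl

/-- the relevant grid indices -/
def KF (R : ℝ) : Finset ℤ := Finset.Icc (-1) ⌈1/R⌉

lemma Bk_inter_unit {R : ℝ} (h0 : 0 < R) {k : ℤ} (hk : k ∉ KF R) :
    Bk R k ∩ Icc (0:ℝ) 1 = ∅ := by
  rw [KF, Finset.mem_Icc, not_and_or] at hk
  rw [eq_empty_iff_forall_notMem]
  rintro x ⟨⟨hx1, hx2⟩, hx3, hx4⟩
  rcases hk with hk | hk
  · push_neg at hk
    have hk2 : (k : ℝ) ≤ -2 := by
      have : k ≤ -2 := by omega
      exact_mod_cast this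
    nlinarith
  · push_neg at hk
    have hk2 : (1/R : ℝ) < k := lt_of_le_of_lt (Int.le_ceil _) (by exact_mod_cast hk)
    rw [div_lt_iff₀ h0] at hk2
    nlinarith

lemma unit_subset_grid {R : ℝ} (h0 : 0 < R) :
    Icc (0:ℝ) 1 ⊆ ⋃ k ∈ KF R, Bk R k := by
  intro x ⟨hx0, hx1⟩
  have hmem : ⌊x / R⌋ ∈ KF R := by
    rw [KF, Finset.mem_Icc]
    constructor
    · have : (0:ℝ) ≤ x / R := div_nonneg hx0 h0.le
      have := Int.floor_nonneg.mpr this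
      omega
    · have h2 : x / R ≤ 1 / R := by
        rw [div_le_div_iff₀ h0 h0]
        nlinarith
      have h3 : (⌊x / R⌋ : ℝ) ≤ ((⌈1/R⌉ : ℤ) : ℝ) :=
        le_trans (Int.floor_le _) (le_trans h2 (Int.le_ceil _))
      exact_mod_cast h3
  refine Set.mem_biUnion hmem ⟨?_, ?_⟩
  · calc (⌊x/R⌋ : ℝ) * R ≤ (x/R) * R := by nlinarith [Int.floor_le (x/R)]
      _ = x := by field_simp
  · have h4 := Int.lt_floor_add_one (x/R)
    calc x = (x/R) * R := by field_simp
      _ ≤ ((⌊x/R⌋ : ℝ) + 1) * R := by nlinarith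

lemma gridSum_eq_sum {μ : Measure ℝ} {a q R : ℝ} (h0 : 0 < R)
    (hout : ∀ k : ℤ, Bk R k ∩ Icc (0:ℝ) 1 = ∅ → μ (Bk R k) = 0) :
    gridSum μ a q R = ∑ k ∈ KF R, gterm μ a q R k := by
  have hfun : ∀ k : ℤ, (if 0 < μ (Set.Icc ((k : ℝ) * R) (((k : ℝ) + 1) * R))
      then (μ (enlarge a ((k : ℝ) * R) (((k : ℝ) + 1) * R))).toReal ^ q else 0)
      = gterm μ a q R k := by
    intro k
    rw [gterm, enlarge_eq]
    rfl
  rw [gridSum]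
  rw [tsum_congr hfun]
  apply tsum_eq_sum
  intro k hk
  rw [gterm, if_neg]
  rw [not_lt, le_zero_iff]
  exact hout k (Bk_inter_unit h0 hk)

/-- generic double counting -/
lemma double_count {α β : Type*} (K : Finset α) (W : Finset β) (P : α → β → Prop)
    [∀ k, DecidablePred (P k)] [∀ w : β, DecidablePred (fun k => P k w)]
    (x : β → ℝ) (hx : ∀ w ∈ W, 0 ≤ x w) (C : ℝ)
    (hC : ∀ w ∈ W, ((K.filter (fun k => P k w)).card : ℝ) ≤ C) :
    ∑ k ∈ K, ∑ w ∈ W.filter (fun w => P k w), x w ≤ C * ∑ w ∈ W, x w := by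
  have h1 : ∀ k ∈ K, ∑ w ∈ W.filter (fun w => P k w), x w
      = ∑ w ∈ W, if P k w then x w else 0 := by
    intro k _
    rw [Finset.sum_filter]
  rw [Finset.sum_congr rfl h1, Finset.sum_comm]
  have h2 : ∀ w ∈ W, ∑ k ∈ K, (if P k w then x w else 0)
      = ((K.filter (fun k => P k w)).card : ℝ) * x w := by
    intro w _
    rw [← Finset.sum_filter, Finset.sum_const, nsmul_eq_mul]
  rw [Finset.sum_congr rfl h2]
  rw [Finset.mul_sum]
  refine Finset.sum_le_sum (fun w hw => ?_)
  exact mul_le_mul_of_nonneg_right (hC w hw) (hx w hw)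

end Grid
namespace IFSSetup
variable (S : IFSSetup)

lemma cyl_left_mem (w : List (Fin S.m)) : S.wf w 0 ∈ S.cyl w := ⟨le_rfl, S.wf_le w⟩

lemma count_meet {R' u v : ℝ} (h0 : 0 < R') (h1 : R' < 1) (huv : u ≤ v) :
    (((S.SF R').filter fun w => (S.cyl w ∩ Icc u v).Nonempty).card : ℝ)
      ≤ (v - u + R') / (S.g * R') + 2 := by
  have hgR : 0 < S.g * R' := mul_pos S.g_pos h0
  have key := card_le_of_int_embed
    ((S.SF R').filter fun w => (S.cyl w ∩ Icc u v).Nonempty)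
    (fun w => ⌊S.wf w 0 / (S.g * R')⌋) ((u - R') / (S.g * R') - 1) (v / (S.g * R'))
    ?_ ?_ ?_
  · refine le_trans key (le_of_eq ?_)
    have h9 : v / (S.g * R') - (u - R') / (S.g * R') = (v - u + R') / (S.g * R') := by
      rw [div_sub_div_same]
      congr 1
      ring
    linarith [h9]
  · -- injectivity
    intro w1 hw1 w2 hw2 heq
    by_contra hne
    rw [Finset.mem_coe, Finset.mem_filter] at hw1 hw2
    have hsep := S.SF_sep h0 h1 hw1.1 hw2.1 hne (S.wf w1 0) (S.cyl_left_mem w1)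
      (S.wf w2 0) (S.cyl_left_mem w2)
    exact floor_sep hgR hsep heq
  · -- A ≤ B
    have : (u - R') / (S.g * R') ≤ v / (S.g * R') := by
      rw [div_le_div_iff₀ hgR hgR]
      nlinarith
    linarith
  · -- range
    intro w hw
    rw [Finset.mem_filter] at hw
    obtain ⟨hwSF, z, hz1, hz2⟩ := hw
    obtain ⟨hz3, hz4⟩ := hz1
    obtain ⟨hz5, hz6⟩ := hz2
    have hA : u - R' ≤ S.wf w 0 := by
      have := S.wf_diff w
      have := S.SF_wr_le h0 h1 hwSF
      linarith
    have hB : S.wf w 0 ≤ v := le_trans hz3 hz6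
    constructor
    · have h5 : (u - R') / (S.g * R') ≤ S.wf w 0 / (S.g * R') := by
        rw [div_le_div_iff₀ hgR hgR]
        nlinarith
      have h6 := Int.sub_one_lt_floor (S.wf w 0 / (S.g * R'))
      linarith
    · have h5 : S.wf w 0 / (S.g * R') ≤ v / (S.g * R') := by
        rw [div_le_div_iff₀ hgR hgR]
        nlinarith
      linarith [Int.floor_le (S.wf w 0 / (S.g * R'))]

lemma count_grid {a R : ℝ} (ha : 0 ≤ a) (h0 : 0 < R) {w : List (Fin S.m)}
    (hwr : S.wr w ≤ R) :
    (((KF R).filter fun k => (S.cyl w ∩ Bek a R k).Nonempty).card : ℝ) ≤ a + 3 := by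
  have key := card_le_of_int_embed
    ((KF R).filter fun k => (S.cyl w ∩ Bek a R k).Nonempty)
    (fun k => k) ((S.wf w 0 - a * R / 2) / R - 1) ((S.wf w 1 + a * R / 2) / R)
    (fun _ _ _ _ h => h) ?_ ?_
  · refine le_trans key ?_
    have h9 : (S.wf w 1 + a * R / 2) / R - (S.wf w 0 - a * R / 2) / R
        = (S.wr w + a * R) / R := by
      rw [div_sub_div_same]
      congr 1
      have := S.wf_diff w
      linarith
    have h10 : (S.wr w + a * R) / R ≤ 1 + a := by
      rw [div_le_iff₀ h0]
      nlinarith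
    linarith
  · have h5 : (S.wf w 0 - a * R / 2) / R ≤ (S.wf w 1 + a * R / 2) / R := by
      rw [div_le_div_iff₀ h0 h0]
      nlinarith [S.wf_le w, mul_nonneg ha h0.le]
    linarith
  · intro k hk
    rw [Finset.mem_filter] at hk
    obtain ⟨-, z, hz1, hz2⟩ := hk
    obtain ⟨hz3, hz4⟩ := hz1
    simp only [Bek, mem_Icc] at hz2
    obtain ⟨hz5, hz6⟩ := hz2
    constructor
    · have h5 : (S.wf w 0 - a * R / 2) / R ≤ (k : ℝ) + 1 := by
        rw [div_le_iff₀ h0]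
        nlinarith
      linarith
    · rw [le_div_iff₀ h0]
      nlinarith

lemma mu_Bek_le_sum {a R R' : ℝ} (h0' : 0 < R') (h1' : R' < 1) (k : ℤ) :
    (S.μ (Bek a R k)).toReal
      ≤ ∑ w ∈ (S.SF R').filter (fun w => (S.cyl w ∩ Bek a R k).Nonempty), S.wp w := by
  set T := (S.SF R').filter (fun w => (S.cyl w ∩ Bek a R k).Nonempty) with hT
  have h2 : S.μ (Bek a R k) ≤ ∑ w ∈ T, ENNReal.ofReal (S.wp w) := by
    set U := ⋃ w ∈ S.SF R', S.cyl w with hU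
    calc S.μ (Bek a R k) ≤ S.μ (Bek a R k ∩ U) + S.μ (Bek a R k \ U) :=
          measure_le_inter_add_diff _ _ _
      _ = S.μ (Bek a R k ∩ U) := by
          rw [measure_mono_null (diff_subset_compl _ _) (S.mu_SF_compl h0' h1'), add_zero]
      _ = S.μ (⋃ w ∈ S.SF R', Bek a R k ∩ S.cyl w) := by rw [hU, inter_iUnion₂]
      _ ≤ ∑ w ∈ S.SF R', S.μ (Bek a R k ∩ S.cyl w) := measure_biUnion_finset_le _ _
      _ = ∑ w ∈ T, S.μ (Bek a R k ∩ S.cyl w) := by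
          symm
          apply Finset.sum_subset (Finset.filter_subset _ _)
          intro w hw hnot
          simp only [Finset.mem_filter, not_and] at hnot
          have hemp := hnot hw
          rw [Set.not_nonempty_iff_eq_empty] at hemp
          rw [inter_comm, hemp, measure_empty]
      _ ≤ ∑ w ∈ T, ENNReal.ofReal (S.wp w) := by
          refine Finset.sum_le_sum (fun w _ => ?_)
          rw [← S.mu_cyl w]
          exact measure_mono inter_subset_right
  have h3 : (∑ w ∈ T, ENNReal.ofReal (S.wp w)).toReal = ∑ w ∈ T, S.wp w := by
    rw [ENNReal.toReal_sum (fun w _ => ENNReal.ofReal_ne_top)]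
    exact Finset.sum_congr rfl (fun w _ => ENNReal.toReal_ofReal (S.wp_pos w).le)
  calc (S.μ (Bek a R k)).toReal
      ≤ (∑ w ∈ T, ENNReal.ofReal (S.wp w)).toReal :=
        ENNReal.toReal_mono
          (ENNReal.sum_lt_top.mpr (fun w _ => ENNReal.ofReal_lt_top)).ne h2
    _ = ∑ w ∈ T, S.wp w := h3

lemma exists_Q {R R' : ℝ} (h0 : 0 < R) (h0' : 0 < R') (h1' : R' < 1)
    {w : List (Fin S.m)} (hw : w ∈ S.SF R') :
    ∃ k ∈ KF R, 0 < S.μ (S.cyl w ∩ Bk R k) := by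
  by_contra hcon
  push_neg at hcon
  have hz : ∀ k ∈ KF R, S.μ (S.cyl w ∩ Bk R k) = 0 :=
    fun k hk => le_antisymm (hcon k hk) zero_le
  have hsub : S.cyl w ⊆ ⋃ k ∈ KF R, S.cyl w ∩ Bk R k := by
    intro x hx
    have hx2 : x ∈ Icc (0:ℝ) 1 := S.cyl_subset w hx
    obtain ⟨k, hk1, hk2⟩ := mem_iUnion₂.mp (unit_subset_grid h0 hx2)
    exact mem_iUnion₂.mpr ⟨k, hk1, hx, hk2⟩
  have h4 : S.μ (S.cyl w) = 0 := by
    refine le_antisymm (le_trans (measure_mono hsub) ?_) zero_le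
    refine le_trans (measure_biUnion_finset_le _ _) ?_
    rw [Finset.sum_congr rfl hz]
    simp
  rw [S.mu_cyl w] at h4
  rw [ENNReal.ofReal_eq_zero] at h4
  linarith [S.wp_pos w]

def eps (c : ℝ) : ℝ := S.rmin * S.g / c
def Lc (c : ℝ) : ℕ := Nat.ceil (Real.log (S.eps c) / Real.log S.rmax)
def Cc (c : ℝ) : ℝ := (S.pmin ^ S.Lc c)⁻¹

lemma Cc_pos (c : ℝ) : 0 < S.Cc c := inv_pos.mpr (pow_pos S.pmin_pos _)

lemma one_le_Cc (c : ℝ) : 1 ≤ S.Cc c := by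
  have hx : 0 < S.pmin ^ S.Lc c := pow_pos S.pmin_pos _
  have hle : S.pmin ^ S.Lc c ≤ 1 := pow_le_one₀ S.pmin_pos.le S.pmin_le_one
  rw [Cc]
  nlinarith [mul_inv_cancel₀ hx.ne', inv_pos.mpr hx]

lemma tail_len_le {c : ℝ} (hc : 0 < c) {n : ℕ} (h : S.eps c < S.rmax ^ n) :
    n ≤ S.Lc c := by
  have heps : 0 < S.eps c := div_pos (mul_pos S.rmin_pos S.g_pos) hc
  have hlog := Real.log_lt_log heps h
  rw [Real.log_pow] at hlog
  have hlrm : Real.log S.rmax < 0 := Real.log_neg S.rmax_pos S.rmax_lt_one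
  have h5 : (n : ℝ) < Real.log (S.eps c) / Real.log S.rmax := by
    rw [lt_div_iff_of_neg hlrm]
    linarith
  have h6 : (n : ℝ) < (S.Lc c : ℝ) := lt_of_lt_of_le h5 (Nat.le_ceil _)
  have h7 : n < S.Lc c := by exact_mod_cast h6
  exact h7.le

lemma wp_close_le {R c : ℝ} (h0 : 0 < R) (h1 : R < 1) (hc : 0 < c)
    {w v : List (Fin S.m)} (hw : w ∈ S.SF R) (hv : v ∈ S.SF R)
    {x y : ℝ} (hx : x ∈ S.cyl w) (hy : y ∈ S.cyl v) (hxy : |x - y| ≤ c * R) :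
    S.wp v ≤ S.Cc c * S.wp w := by
  by_cases hne : v = w
  · subst hne
    nlinarith [S.one_le_Cc c, S.wp_pos v]
  · have hsw := (S.mem_SF h0 h1 w).mp hw
    have hsv := (S.mem_SF h0 h1 v).mp hv
    have hnp : ¬ w <+: v := by
      intro hp
      have := hsv.2 w hp (Ne.symm hne)
      linarith [hsw.1]
    have hnp' : ¬ v <+: w := by
      intro hp
      have := hsw.2 v hp hne
      linarith [hsv.1]
    obtain ⟨u, huw, huv, hunw, _, hbound⟩ := S.sep w v hnp hnp'
    have h2 : S.g * S.wr u ≤ c * R := le_trans (hbound x hx y hy) hxy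
    have hwru : S.wr u ≤ c * R / S.g := by
      rw [le_div_iff₀ S.g_pos]
      linarith [mul_comm S.g (S.wr u)]
    obtain ⟨t, rfl⟩ := huw
    have hlen : t.length ≤ S.Lc c := by
      apply S.tail_len_le hc
      have hA : S.rmin * R < S.wr (u ++ t) := S.SF_wr_gt h0 h1 hw
      have hB : S.wr (u ++ t) = S.wr u * S.wr t := S.wr_append u t
      have hC : S.wr t ≤ S.rmax ^ t.length := S.wr_pow_le t
      -- rmin * R < (cR/g) * rmax ^ len  ⟹  eps c < rmax ^ len
      have hD : S.rmin * R < (c * R / S.g) * S.rmax ^ t.length := by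
        calc S.rmin * R < S.wr u * S.wr t := by rw [← hB]; exact hA
          _ ≤ (c * R / S.g) * S.rmax ^ t.length :=
            mul_le_mul hwru hC (S.wr_pos t).le
              (le_trans (S.wr_pos u).le hwru)
      rw [eps, div_lt_iff₀ hc]
      have hE : c * R / S.g * S.g = c * R := div_mul_cancel₀ _ S.g_pos.ne'
      nlinarith [hD, hE, h0, S.g_pos, hc, pow_pos S.rmax_pos t.length]
    have hwpt : S.pmin ^ S.Lc c ≤ S.wp t :=
      le_trans (pow_le_pow_of_le_one S.pmin_pos.le S.pmin_le_one hlen)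
        (S.pmin_pow_le_wp t)
    have hwpw : S.wp (u ++ t) = S.wp u * S.wp t := S.wp_append u t
    have hu_le : S.wp u ≤ S.Cc c * S.wp (u ++ t) := by
      rw [hwpw, Cc]
      have hx1 : 0 < S.pmin ^ S.Lc c := pow_pos S.pmin_pos _
      have h8 : 1 ≤ (S.pmin ^ S.Lc c)⁻¹ * S.wp t := by
        nlinarith [inv_pos.mpr hx1, hwpt, mul_inv_cancel₀ hx1.ne']
      nlinarith [S.wp_pos u, h8]
    exact le_trans (S.wp_prefix huv) hu_le

end IFSSetup
namespace IFSSetup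
variable (S : IFSSetup)

lemma count_meet_Bek {a R R' : ℝ} (h0' : 0 < R') (h1' : R' < 1) (ha : 0 ≤ a)
    (h0 : 0 < R) (k : ℤ) :
    (((S.SF R').filter fun w => (S.cyl w ∩ Bek a R k).Nonempty).card : ℝ)
      ≤ ((1 + a) * R + R') / (S.g * R') + 2 := by
  have huv : (k : ℝ) * R - a * R / 2 ≤ ((k : ℝ) + 1) * R + a * R / 2 := by
    nlinarith [mul_nonneg ha h0.le]
  have hthis := S.count_meet (u := (k : ℝ) * R - a * R / 2)
    (v := ((k : ℝ) + 1) * R + a * R / 2) h0' h1' huv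
  have h9 : (((k:ℝ) + 1) * R + a * R / 2 - ((k:ℝ) * R - a * R / 2) + R')
      = ((1 + a) * R + R') := by ring
  rw [h9] at hthis
  exact hthis

/-- Estimate 1 : upper bound for `q ≥ 0` -/
lemma est_upper_q_nonneg {a q β R : ℝ} (hβ : ∑ i, S.p i ^ q * S.r i ^ β = 1)
    (ha : 0 < a) (hq : 0 ≤ q) (h0 : 0 < R) (h1 : R < 1) :
    ∑ k ∈ KF R, gterm S.μ a q R k
      ≤ (((2 + a) / S.g + 2) ^ q * (a + 3)) * (S.Kb β * R ^ (-β)) := by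
  set CA : ℝ := (2 + a) / S.g + 2 with hCAdef
  have hCA : 0 < CA := by
    have := S.g_pos
    positivity
  have hcard_bound : ∀ k : ℤ,
      ((((S.SF R).filter fun w => (S.cyl w ∩ Bek a R k).Nonempty).card : ℝ)) ≤ CA := by
    intro k
    refine le_trans (S.count_meet_Bek h0 h1 ha.le h0 k) ?_
    have h9 : ((1 + a) * R + R) / (S.g * R) = (2 + a) / S.g := by
      rw [div_eq_div_iff (mul_pos S.g_pos h0).ne' S.g_pos.ne']
      ring
    rw [hCAdef, h9]
  -- pointwise bound
  have hpt : ∀ k ∈ KF R, gterm S.μ a q R k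
      ≤ CA ^ q * ∑ w ∈ (S.SF R).filter (fun w => (S.cyl w ∩ Bek a R k).Nonempty),
          S.wp w ^ q := by
    intro k _
    set Tk := (S.SF R).filter (fun w => (S.cyl w ∩ Bek a R k).Nonempty) with hTk
    have hTnonneg : 0 ≤ ∑ w ∈ Tk, S.wp w ^ q :=
      Finset.sum_nonneg (fun w _ => Real.rpow_nonneg (S.wp_pos w).le q)
    by_cases hpos : 0 < S.μ (Bk R k)
    · rw [gterm, if_pos hpos]
      obtain ⟨w0, hw0SF, hw0pos⟩ := S.exists_SF_pos h0 h1
        (A := Bek a R k) (lt_of_lt_of_le hpos (measure_mono (Bk_subset_Bek ha.le R h0.le k)))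
      have hw0T : w0 ∈ Tk := by
        rw [hTk, Finset.mem_filter]
        refine ⟨hw0SF, ?_⟩
        obtain ⟨z, hz⟩ := nonempty_of_measure_ne_zero hw0pos.ne'
        exact ⟨z, hz.2, hz.1⟩
      obtain ⟨wm, hwmT, hwm⟩ := Finset.exists_max_image Tk S.wp ⟨w0, hw0T⟩
      have hsum1 : (S.μ (Bek a R k)).toReal ≤ ∑ w ∈ Tk, S.wp w := S.mu_Bek_le_sum h0 h1 k
      have hsum2 : ∑ w ∈ Tk, S.wp w ≤ (Tk.card : ℝ) * S.wp wm := by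
        have := Finset.sum_le_card_nsmul Tk S.wp (S.wp wm) (fun w hw => hwm w hw)
        simpa [nsmul_eq_mul] using this
      have h3 : (S.μ (Bek a R k)).toReal ^ q ≤ (CA * S.wp wm) ^ q := by
        refine Real.rpow_le_rpow ENNReal.toReal_nonneg ?_ hq
        refine le_trans hsum1 (le_trans hsum2 ?_)
        exact mul_le_mul_of_nonneg_right (hcard_bound k) (S.wp_pos wm).le
      have h4 : (CA * S.wp wm) ^ q = CA ^ q * S.wp wm ^ q :=
        Real.mul_rpow hCA.le (S.wp_pos wm).le
      have h5 : S.wp wm ^ q ≤ ∑ w ∈ Tk, S.wp w ^ q :=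
        Finset.single_le_sum (fun w _ => Real.rpow_nonneg (S.wp_pos w).le q) hwmT
      calc (S.μ (Bek a R k)).toReal ^ q ≤ (CA * S.wp wm) ^ q := h3
        _ = CA ^ q * S.wp wm ^ q := h4
        _ ≤ CA ^ q * ∑ w ∈ Tk, S.wp w ^ q :=
            mul_le_mul_of_nonneg_left h5 (Real.rpow_nonneg hCA.le q)
    · rw [gterm, if_neg hpos]
      exact mul_nonneg (Real.rpow_nonneg hCA.le q) hTnonneg
  -- sum up
  calc ∑ k ∈ KF R, gterm S.μ a q R k
      ≤ ∑ k ∈ KF R, CA ^ q * ∑ w ∈ (S.SF R).filter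
          (fun w => (S.cyl w ∩ Bek a R k).Nonempty), S.wp w ^ q :=
        Finset.sum_le_sum hpt
    _ = CA ^ q * ∑ k ∈ KF R, ∑ w ∈ (S.SF R).filter
          (fun w => (S.cyl w ∩ Bek a R k).Nonempty), S.wp w ^ q := by
        rw [Finset.mul_sum]
    _ ≤ CA ^ q * ((a + 3) * ∑ w ∈ S.SF R, S.wp w ^ q) := by
        refine mul_le_mul_of_nonneg_left ?_ (Real.rpow_nonneg hCA.le q)
        refine double_count (KF R) (S.SF R) (fun k w => (S.cyl w ∩ Bek a R k).Nonempty)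
          (fun w => S.wp w ^ q) (fun w _ => Real.rpow_nonneg (S.wp_pos w).le q) (a + 3) ?_
        intro w hw
        exact S.count_grid ha.le h0 (S.SF_wr_le h0 h1 hw)
    _ ≤ CA ^ q * ((a + 3) * (S.Kb β * R ^ (-β))) := by
        refine mul_le_mul_of_nonneg_left (mul_le_mul_of_nonneg_left ?_ (by linarith)) 
          (Real.rpow_nonneg hCA.le q)
        exact S.SF_sum_wpq_le hβ h0 h1
    _ = (CA ^ q * (a + 3)) * (S.Kb β * R ^ (-β)) := by ring

/-- Estimate 2 : upper bound for `q < 0` -/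
lemma est_upper_q_neg {a q β R : ℝ} (hβ : ∑ i, S.p i ^ q * S.r i ^ β = 1)
    (ha : 0 < a) (hq : q < 0) (h0 : 0 < R) (h1 : R < 1) :
    ∑ k ∈ KF R, gterm S.μ a q R k
      ≤ 3 * (S.Kb β * (min (a/2) 2⁻¹ * R) ^ (-β)) := by
  set c0 : ℝ := min (a/2) 2⁻¹ with hc0def
  have hc0 : 0 < c0 := lt_min (by linarith) (by norm_num)
  have hc0half : c0 ≤ 2⁻¹ := min_le_right _ _
  have hc0a : c0 ≤ a / 2 := min_le_left _ _
  have h0' : 0 < c0 * R := mul_pos hc0 h0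
  have h1' : c0 * R < 1 := by nlinarith
  have hpt : ∀ k ∈ KF R, gterm S.μ a q R k
      ≤ ∑ w ∈ (S.SF (c0 * R)).filter (fun w => 0 < S.μ (Bk R k ∩ S.cyl w)),
          S.wp w ^ q := by
    intro k _
    set Tk := (S.SF (c0 * R)).filter (fun w => 0 < S.μ (Bk R k ∩ S.cyl w)) with hTk
    have hTnonneg : 0 ≤ ∑ w ∈ Tk, S.wp w ^ q :=
      Finset.sum_nonneg (fun w _ => Real.rpow_nonneg (S.wp_pos w).le q)
    by_cases hpos : 0 < S.μ (Bk R k)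
    · rw [gterm, if_pos hpos]
      obtain ⟨w0, hw0SF, hw0pos⟩ := S.exists_SF_pos h0' h1' (A := Bk R k) hpos
      have hw0T : w0 ∈ Tk := by
        rw [hTk, Finset.mem_filter]
        exact ⟨hw0SF, hw0pos⟩
      -- cyl w0 ⊆ Bek a R k
      have hsub : S.cyl w0 ⊆ Bek a R k := by
        obtain ⟨z, hz1, hz2⟩ := nonempty_of_measure_ne_zero hw0pos.ne'
        obtain ⟨hz3, hz4⟩ := hz1
        obtain ⟨hz5, hz6⟩ := hz2
        have hwr : S.wr w0 ≤ a * R / 2 := by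
          have := S.SF_wr_le h0' h1' hw0SF
          nlinarith
        have hdiff := S.wf_diff w0
        intro x hx
        obtain ⟨hx1, hx2⟩ := hx
        constructor
        · linarith
        · linarith
      have hle : S.wp w0 ≤ (S.μ (Bek a R k)).toReal := by
        have h2 : ENNReal.ofReal (S.wp w0) ≤ S.μ (Bek a R k) := by
          rw [← S.mu_cyl w0]
          exact measure_mono hsub
        have h3 := ENNReal.toReal_mono (S.mu_ne_top _) h2
        rwa [ENNReal.toReal_ofReal (S.wp_pos w0).le] at h3
      have h4 : (S.μ (Bek a R k)).toReal ^ q ≤ S.wp w0 ^ q :=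
        Real.rpow_le_rpow_of_nonpos (S.wp_pos w0) hle hq.le
      refine le_trans h4 ?_
      exact Finset.single_le_sum (fun w _ => Real.rpow_nonneg (S.wp_pos w).le q) hw0T
    · rw [gterm, if_neg hpos]
      exact hTnonneg
  calc ∑ k ∈ KF R, gterm S.μ a q R k
      ≤ ∑ k ∈ KF R, ∑ w ∈ (S.SF (c0 * R)).filter
          (fun w => 0 < S.μ (Bk R k ∩ S.cyl w)), S.wp w ^ q :=
        Finset.sum_le_sum hpt
    _ ≤ 3 * ∑ w ∈ S.SF (c0 * R), S.wp w ^ q := by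
        refine double_count (KF R) (S.SF (c0 * R)) (fun k w => 0 < S.μ (Bk R k ∩ S.cyl w))
          (fun w => S.wp w ^ q) (fun w _ => Real.rpow_nonneg (S.wp_pos w).le q) 3 ?_
        intro w hw
        have hsub : (KF R).filter (fun k => 0 < S.μ (Bk R k ∩ S.cyl w))
            ⊆ (KF R).filter (fun k => (S.cyl w ∩ Bek 0 R k).Nonempty) := by
          intro k hk
          simp only [Finset.mem_filter] at hk ⊢
          refine ⟨hk.1, ?_⟩
          obtain ⟨z, hz⟩ := nonempty_of_measure_ne_zero hk.2.ne'
          refine ⟨z, hz.2, ?_⟩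
          rw [Bek_zero]
          exact hz.1
        have hcg := S.count_grid (le_refl 0) h0
          (le_trans (S.SF_wr_le h0' h1' hw) (by nlinarith : c0 * R ≤ R))
        calc (((KF R).filter (fun k => 0 < S.μ (Bk R k ∩ S.cyl w))).card : ℝ)
            ≤ (((KF R).filter (fun k => (S.cyl w ∩ Bek 0 R k).Nonempty)).card : ℝ) :=
              Nat.cast_le.mpr (Finset.card_le_card hsub)
          _ ≤ 0 + 3 := hcg
          _ = 3 := by norm_num
    _ ≤ 3 * (S.Kb β * (c0 * R) ^ (-β)) := by
        refine mul_le_mul_of_nonneg_left ?_ (by norm_num)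
        exact S.SF_sum_wpq_le hβ h0' h1'

end IFSSetup
namespace IFSSetup
variable (S : IFSSetup)

lemma count_Q {R : ℝ} (h0 : 0 < R) (h1 : R < 1) (k : ℤ) :
    (((S.SF R).filter (fun w => 0 < S.μ (S.cyl w ∩ Bk R k))).card : ℝ) ≤ 2 / S.g + 2 := by
  have hsub : (S.SF R).filter (fun w => 0 < S.μ (S.cyl w ∩ Bk R k))
      ⊆ (S.SF R).filter (fun w =>
          (S.cyl w ∩ Icc ((k:ℝ) * R) (((k:ℝ) + 1) * R)).Nonempty) := by
    intro w hw
    simp only [Finset.mem_filter] at hw ⊢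
    refine ⟨hw.1, ?_⟩
    obtain ⟨z, hz⟩ := nonempty_of_measure_ne_zero hw.2.ne'
    exact ⟨z, hz.1, hz.2⟩
  have hcm := S.count_meet (u := (k:ℝ) * R) (v := ((k:ℝ) + 1) * R) h0 h1
    (by nlinarith)
  have h9 : ((k:ℝ) + 1) * R - (k:ℝ) * R + R = 2 * R := by ring
  rw [h9] at hcm
  have h10 : 2 * R / (S.g * R) = 2 / S.g := by
    rw [div_eq_div_iff (mul_pos S.g_pos h0).ne' S.g_pos.ne']
    ring
  rw [h10] at hcm
  exact le_trans (Nat.cast_le.mpr (Finset.card_le_card hsub)) hcm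

lemma mu_cyl_le_sum_Q {R : ℝ} (h0 : 0 < R) (w : List (Fin S.m)) :
    ENNReal.ofReal (S.wp w)
      ≤ ∑ k ∈ (KF R).filter (fun k => 0 < S.μ (S.cyl w ∩ Bk R k)),
          S.μ (S.cyl w ∩ Bk R k) := by
  rw [← S.mu_cyl w]
  have hsub : S.cyl w ⊆ ⋃ k ∈ KF R, S.cyl w ∩ Bk R k := by
    intro x hx
    have hx2 : x ∈ Icc (0:ℝ) 1 := S.cyl_subset w hx
    obtain ⟨k, hk1, hk2⟩ := mem_iUnion₂.mp (unit_subset_grid h0 hx2)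
    exact mem_iUnion₂.mpr ⟨k, hk1, hx, hk2⟩
  calc S.μ (S.cyl w) ≤ S.μ (⋃ k ∈ KF R, S.cyl w ∩ Bk R k) := measure_mono hsub
    _ ≤ ∑ k ∈ KF R, S.μ (S.cyl w ∩ Bk R k) := measure_biUnion_finset_le _ _
    _ = ∑ k ∈ (KF R).filter (fun k => 0 < S.μ (S.cyl w ∩ Bk R k)),
          S.μ (S.cyl w ∩ Bk R k) := by
        symm
        apply Finset.sum_subset (Finset.filter_subset _ _)
        intro k hk hnot
        simp only [Finset.mem_filter, not_and] at hnot
        have := hnot hk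
        simpa [not_lt, le_zero_iff] using this

/-- Estimate 3 : lower bound for `q ≥ 0` -/
lemma est_lower_q_nonneg {a q β R : ℝ} (hβ : ∑ i, S.p i ^ q * S.r i ^ β = 1)
    (ha : 0 < a) (hq : 0 ≤ q) (h0 : 0 < R) (h1 : R < 1) :
    S.kb β * R ^ (-β) ≤ (3 ^ q * (2 / S.g + 2)) * ∑ k ∈ KF R, gterm S.μ a q R k := by
  have hpt : ∀ w ∈ S.SF R, S.wp w ^ q ≤ 3 ^ q *
      ∑ k ∈ (KF R).filter (fun k => 0 < S.μ (S.cyl w ∩ Bk R k)), gterm S.μ a q R k := by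
    intro w hw
    set Tw := (KF R).filter (fun k => 0 < S.μ (S.cyl w ∩ Bk R k)) with hTw
    obtain ⟨k0, hk0KF, hk0⟩ := S.exists_Q h0 h0 h1 hw
    have hk0T : k0 ∈ Tw := by rw [hTw, Finset.mem_filter]; exact ⟨hk0KF, hk0⟩
    -- real-valued covering bound
    have hc1 : S.wp w ≤ ∑ k ∈ Tw, (S.μ (S.cyl w ∩ Bk R k)).toReal := by
      have h2 := S.mu_cyl_le_sum_Q (R := R) h0 w
      have h3 := ENNReal.toReal_mono
        (ENNReal.sum_lt_top.mpr (fun k _ => lt_of_le_of_lt prob_le_one (by norm_num))).ne h2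
      rw [ENNReal.toReal_ofReal (S.wp_pos w).le] at h3
      rw [ENNReal.toReal_sum (fun k _ => S.mu_ne_top _)] at h3
      exact h3
    have hc2 : ∀ k ∈ Tw, (S.μ (S.cyl w ∩ Bk R k)).toReal ≤ (S.μ (Bek a R k)).toReal := by
      intro k _
      refine ENNReal.toReal_mono (S.mu_ne_top _) (measure_mono ?_)
      exact subset_trans inter_subset_right (Bk_subset_Bek ha.le R h0.le k)
    obtain ⟨km, hkmT, hkm⟩ := Finset.exists_max_image Tw
      (fun k => (S.μ (Bek a R k)).toReal) ⟨k0, hk0T⟩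
    have hcard : (Tw.card : ℝ) ≤ 3 := by
      have hsub : Tw ⊆ (KF R).filter (fun k => (S.cyl w ∩ Bek 0 R k).Nonempty) := by
        intro k hk
        rw [hTw, Finset.mem_filter] at hk
        simp only [Finset.mem_filter]
        refine ⟨hk.1, ?_⟩
        obtain ⟨z, hz⟩ := nonempty_of_measure_ne_zero hk.2.ne'
        refine ⟨z, hz.1, ?_⟩
        rw [Bek_zero]
        exact hz.2
      have hcg := S.count_grid (le_refl 0) h0 (S.SF_wr_le h0 h1 hw)
      calc (Tw.card : ℝ)
          ≤ (((KF R).filter (fun k => (S.cyl w ∩ Bek 0 R k).Nonempty)).card : ℝ) :=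
            Nat.cast_le.mpr (Finset.card_le_card hsub)
        _ ≤ 0 + 3 := hcg
        _ = 3 := by norm_num
    have hM : 0 ≤ (S.μ (Bek a R km)).toReal := ENNReal.toReal_nonneg
    have hc3 : S.wp w ≤ 3 * (S.μ (Bek a R km)).toReal := by
      have h4 : ∑ k ∈ Tw, (S.μ (S.cyl w ∩ Bk R k)).toReal
          ≤ (Tw.card : ℝ) * (S.μ (Bek a R km)).toReal := by
        have := Finset.sum_le_card_nsmul Tw (fun k => (S.μ (S.cyl w ∩ Bk R k)).toReal)
          ((S.μ (Bek a R km)).toReal)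
          (fun k hk => le_trans (hc2 k hk) (hkm k hk))
        simpa [nsmul_eq_mul] using this
      calc S.wp w ≤ ∑ k ∈ Tw, (S.μ (S.cyl w ∩ Bk R k)).toReal := hc1
        _ ≤ (Tw.card : ℝ) * (S.μ (Bek a R km)).toReal := h4
        _ ≤ 3 * (S.μ (Bek a R km)).toReal := mul_le_mul_of_nonneg_right hcard hM
    have h5 : S.wp w ^ q ≤ (3 * (S.μ (Bek a R km)).toReal) ^ q :=
      Real.rpow_le_rpow (S.wp_pos w).le hc3 hq
    have h6 : (3 * (S.μ (Bek a R km)).toReal) ^ q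
        = 3 ^ q * (S.μ (Bek a R km)).toReal ^ q :=
      Real.mul_rpow (by norm_num) hM
    have hkmpos : 0 < S.μ (Bk R km) := by
      rw [hTw, Finset.mem_filter] at hkmT
      exact lt_of_lt_of_le hkmT.2 (measure_mono inter_subset_right)
    have h7 : (S.μ (Bek a R km)).toReal ^ q = gterm S.μ a q R km := by
      rw [gterm, if_pos hkmpos]
    have h8 : gterm S.μ a q R km ≤ ∑ k ∈ Tw, gterm S.μ a q R k :=
      Finset.single_le_sum (fun k _ => gterm_nonneg S.μ a q R k) hkmT
    calc S.wp w ^ q ≤ (3 * (S.μ (Bek a R km)).toReal) ^ q := h5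
      _ = 3 ^ q * (S.μ (Bek a R km)).toReal ^ q := h6
      _ = 3 ^ q * gterm S.μ a q R km := by rw [h7]
      _ ≤ 3 ^ q * ∑ k ∈ Tw, gterm S.μ a q R k :=
          mul_le_mul_of_nonneg_left h8 (Real.rpow_nonneg (by norm_num) q)
  calc S.kb β * R ^ (-β) ≤ ∑ w ∈ S.SF R, S.wp w ^ q := S.SF_sum_wpq_ge hβ h0 h1
    _ ≤ ∑ w ∈ S.SF R, 3 ^ q * ∑ k ∈ (KF R).filter
        (fun k => 0 < S.μ (S.cyl w ∩ Bk R k)), gterm S.μ a q R k :=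
      Finset.sum_le_sum hpt
    _ = 3 ^ q * ∑ w ∈ S.SF R, ∑ k ∈ (KF R).filter
        (fun k => 0 < S.μ (S.cyl w ∩ Bk R k)), gterm S.μ a q R k := by
      rw [Finset.mul_sum]
    _ ≤ 3 ^ q * ((2 / S.g + 2) * ∑ k ∈ KF R, gterm S.μ a q R k) := by
      refine mul_le_mul_of_nonneg_left ?_ (Real.rpow_nonneg (by norm_num) q)
      refine double_count (S.SF R) (KF R) (fun w k => 0 < S.μ (S.cyl w ∩ Bk R k))
        (gterm S.μ a q R) (fun k _ => gterm_nonneg S.μ a q R k) (2 / S.g + 2) ?_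
      intro k _
      exact S.count_Q h0 h1 k
    _ = (3 ^ q * (2 / S.g + 2)) * ∑ k ∈ KF R, gterm S.μ a q R k := by ring

/-- Estimate 4 : lower bound for `q < 0` -/
lemma est_lower_q_neg {a q β R : ℝ} (hβ : ∑ i, S.p i ^ q * S.r i ^ β = 1)
    (ha : 0 < a) (hq : q < 0) (h0 : 0 < R) (h1 : R < 1) :
    S.kb β * R ^ (-β)
      ≤ (((((2 + a) / S.g + 2) * S.Cc (1 + a)) ^ q)⁻¹ * (2 / S.g + 2))
        * ∑ k ∈ KF R, gterm S.μ a q R k := by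
  set CA : ℝ := (2 + a) / S.g + 2 with hCAdef
  have hCA : 0 < CA := by
    have := S.g_pos
    positivity
  set CC : ℝ := CA * S.Cc (1 + a) with hCCdef
  have hCC : 0 < CC := mul_pos hCA (S.Cc_pos _)
  set CI : ℝ := (CC ^ q)⁻¹ with hCIdef
  have hCI : 0 < CI := inv_pos.mpr (Real.rpow_pos_of_pos hCC q)
  have hcard_bound : ∀ k : ℤ,
      ((((S.SF R).filter fun v => (S.cyl v ∩ Bek a R k).Nonempty).card : ℝ)) ≤ CA := by
    intro k
    refine le_trans (S.count_meet_Bek h0 h1 ha.le h0 k) ?_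
    have h9 : ((1 + a) * R + R) / (S.g * R) = (2 + a) / S.g := by
      rw [div_eq_div_iff (mul_pos S.g_pos h0).ne' S.g_pos.ne']
      ring
    rw [hCAdef, h9]
  have hpt : ∀ w ∈ S.SF R, S.wp w ^ q ≤ CI *
      ∑ k ∈ (KF R).filter (fun k => 0 < S.μ (S.cyl w ∩ Bk R k)), gterm S.μ a q R k := by
    intro w hw
    obtain ⟨k0, hk0KF, hk0⟩ := S.exists_Q h0 h0 h1 hw
    obtain ⟨x, hx1, hx2⟩ := nonempty_of_measure_ne_zero hk0.ne'
    have hx2' : x ∈ Bek a R k0 := Bk_subset_Bek ha.le R h0.le k0 hx2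
    -- μ(Bek) ≤ CC * wp w
    have hBle : (S.μ (Bek a R k0)).toReal ≤ CC * S.wp w := by
      refine le_trans (S.mu_Bek_le_sum h0 h1 k0) ?_
      set Tk := (S.SF R).filter (fun v => (S.cyl v ∩ Bek a R k0).Nonempty) with hTk
      have hterm : ∀ v ∈ Tk, S.wp v ≤ S.Cc (1 + a) * S.wp w := by
        intro v hv
        rw [hTk, Finset.mem_filter] at hv
        obtain ⟨hvSF, y, hy1, hy2⟩ := hv
        have hxy : |x - y| ≤ (1 + a) * R := by
          obtain ⟨ha1, ha2⟩ := hx2'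
          obtain ⟨hb1, hb2⟩ := hy2
          rw [abs_sub_le_iff]
          constructor <;> nlinarith
        exact S.wp_close_le h0 h1 (by linarith : (0:ℝ) < 1 + a) hw hvSF hx1 hy1 hxy
      have h4 : ∑ v ∈ Tk, S.wp v ≤ (Tk.card : ℝ) * (S.Cc (1 + a) * S.wp w) := by
        have := Finset.sum_le_card_nsmul Tk S.wp (S.Cc (1 + a) * S.wp w) hterm
        simpa [nsmul_eq_mul] using this
      calc ∑ v ∈ Tk, S.wp v ≤ (Tk.card : ℝ) * (S.Cc (1 + a) * S.wp w) := h4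
        _ ≤ CA * (S.Cc (1 + a) * S.wp w) := by
            refine mul_le_mul_of_nonneg_right (hcard_bound k0) ?_
            exact mul_nonneg (S.Cc_pos _).le (S.wp_pos w).le
        _ = CC * S.wp w := by rw [hCCdef]; ring
    have hBkpos : 0 < S.μ (Bk R k0) :=
      lt_of_lt_of_le hk0 (measure_mono inter_subset_right)
    have hBpos : 0 < (S.μ (Bek a R k0)).toReal :=
      ENNReal.toReal_pos
        (lt_of_lt_of_le hBkpos (measure_mono (Bk_subset_Bek ha.le R h0.le k0))).ne'
        (S.mu_ne_top _)
    have h5 : (CC * S.wp w) ^ q ≤ gterm S.μ a q R k0 := by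
      rw [gterm, if_pos hBkpos]
      exact Real.rpow_le_rpow_of_nonpos hBpos hBle hq.le
    have h6 : S.wp w ^ q = CI * (CC * S.wp w) ^ q := by
      rw [Real.mul_rpow hCC.le (S.wp_pos w).le, hCIdef, ← mul_assoc,
        inv_mul_cancel₀ (Real.rpow_pos_of_pos hCC q).ne', one_mul]
    have hk0T : k0 ∈ (KF R).filter (fun k => 0 < S.μ (S.cyl w ∩ Bk R k)) := by
      rw [Finset.mem_filter]
      exact ⟨hk0KF, hk0⟩
    calc S.wp w ^ q = CI * (CC * S.wp w) ^ q := h6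
      _ ≤ CI * gterm S.μ a q R k0 := mul_le_mul_of_nonneg_left h5 hCI.le
      _ ≤ CI * ∑ k ∈ (KF R).filter (fun k => 0 < S.μ (S.cyl w ∩ Bk R k)),
            gterm S.μ a q R k := by
          refine mul_le_mul_of_nonneg_left ?_ hCI.le
          exact Finset.single_le_sum (fun k _ => gterm_nonneg S.μ a q R k) hk0T
  calc S.kb β * R ^ (-β) ≤ ∑ w ∈ S.SF R, S.wp w ^ q := S.SF_sum_wpq_ge hβ h0 h1
    _ ≤ ∑ w ∈ S.SF R, CI * ∑ k ∈ (KF R).filter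
        (fun k => 0 < S.μ (S.cyl w ∩ Bk R k)), gterm S.μ a q R k :=
      Finset.sum_le_sum hpt
    _ = CI * ∑ w ∈ S.SF R, ∑ k ∈ (KF R).filter
        (fun k => 0 < S.μ (S.cyl w ∩ Bk R k)), gterm S.μ a q R k := by
      rw [Finset.mul_sum]
    _ ≤ CI * ((2 / S.g + 2) * ∑ k ∈ KF R, gterm S.μ a q R k) := by
      refine mul_le_mul_of_nonneg_left ?_ hCI.le
      refine double_count (S.SF R) (KF R) (fun w k => 0 < S.μ (S.cyl w ∩ Bk R k))
        (gterm S.μ a q R) (fun k _ => gterm_nonneg S.μ a q R k) (2 / S.g + 2) ?_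
      intro k _
      exact S.count_Q h0 h1 k
    _ = (CI * (2 / S.g + 2)) * ∑ k ∈ KF R, gterm S.μ a q R k := by ring

end IFSSetup
namespace IFSSetup
variable (S : IFSSetup)

lemma gridSum_eq {a q R : ℝ} (h0 : 0 < R) :
    gridSum S.μ a q R = ∑ k ∈ KF R, gterm S.μ a q R k :=
  gridSum_eq_sum h0 (fun _ hk => S.mu_null_of_disjoint hk)

lemma gridSum_nonneg {a q R : ℝ} (h0 : 0 < R) : 0 ≤ gridSum S.μ a q R := by
  rw [S.gridSum_eq h0]
  exact Finset.sum_nonneg (fun k _ => gterm_nonneg S.μ a q R k)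

lemma gridSum_upper {a q β : ℝ} (hβ : ∑ i, S.p i ^ q * S.r i ^ β = 1) (ha : 0 < a) :
    ∃ C : ℝ, 0 < C ∧ ∀ R, 0 < R → R < 1 → gridSum S.μ a q R ≤ C * R ^ (-β) := by
  rcases le_or_gt 0 q with hq | hq
  · refine ⟨((2 + a) / S.g + 2) ^ q * (a + 3) * S.Kb β, ?_, ?_⟩
    · have h1 := S.g_pos
      have h2 := S.Kb_pos β
      have h3 : (0:ℝ) < ((2 + a) / S.g + 2) ^ q :=
        Real.rpow_pos_of_pos (by positivity) q
      have h4 : (0:ℝ) < a + 3 := by linarith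
      exact mul_pos (mul_pos h3 h4) h2
    · intro R h0 h1
      rw [S.gridSum_eq h0]
      calc ∑ k ∈ KF R, gterm S.μ a q R k
          ≤ (((2 + a) / S.g + 2) ^ q * (a + 3)) * (S.Kb β * R ^ (-β)) :=
            S.est_upper_q_nonneg hβ ha hq h0 h1
        _ = ((2 + a) / S.g + 2) ^ q * (a + 3) * S.Kb β * R ^ (-β) := by ring
  · refine ⟨3 * S.Kb β * (min (a/2) 2⁻¹) ^ (-β), ?_, ?_⟩
    · have h2 := S.Kb_pos β
      have hc0 : (0:ℝ) < min (a/2) 2⁻¹ := lt_min (by linarith) (by norm_num)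
      have h3 := Real.rpow_pos_of_pos hc0 (-β)
      exact mul_pos (mul_pos (by norm_num) h2) h3
    · intro R h0 h1
      rw [S.gridSum_eq h0]
      have hc0 : (0:ℝ) < min (a/2) 2⁻¹ := lt_min (by linarith) (by norm_num)
      calc ∑ k ∈ KF R, gterm S.μ a q R k
          ≤ 3 * (S.Kb β * (min (a/2) 2⁻¹ * R) ^ (-β)) := S.est_upper_q_neg hβ ha hq h0 h1
        _ = 3 * S.Kb β * (min (a/2) 2⁻¹) ^ (-β) * R ^ (-β) := by
            rw [Real.mul_rpow hc0.le h0.le]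
            ring

lemma gridSum_lower {a q β : ℝ} (hβ : ∑ i, S.p i ^ q * S.r i ^ β = 1) (ha : 0 < a) :
    ∃ c : ℝ, 0 < c ∧ ∀ R, 0 < R → R < 1 → c * R ^ (-β) ≤ gridSum S.μ a q R := by
  rcases le_or_gt 0 q with hq | hq
  · have hK : (0:ℝ) < 3 ^ q * (2 / S.g + 2) := by
      have h1 := S.g_pos
      have h2 : (0:ℝ) < (3:ℝ) ^ q := Real.rpow_pos_of_pos (by norm_num) q
      positivity
    refine ⟨S.kb β / (3 ^ q * (2 / S.g + 2)), div_pos (S.kb_pos β) hK, ?_⟩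
    intro R h0 h1
    rw [S.gridSum_eq h0, div_mul_eq_mul_div, div_le_iff₀ hK]
    calc S.kb β * R ^ (-β)
        ≤ (3 ^ q * (2 / S.g + 2)) * ∑ k ∈ KF R, gterm S.μ a q R k :=
          S.est_lower_q_nonneg hβ ha hq h0 h1
      _ = (∑ k ∈ KF R, gterm S.μ a q R k) * (3 ^ q * (2 / S.g + 2)) := by ring
  · have hCC : (0:ℝ) < ((2 + a) / S.g + 2) * S.Cc (1 + a) := by
      have h1 := S.g_pos
      have h2 := S.Cc_pos (1 + a)
      positivity
    have hK : (0:ℝ) < ((((2 + a) / S.g + 2) * S.Cc (1 + a)) ^ q)⁻¹ * (2 / S.g + 2) := by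
      have h1 := S.g_pos
      have h2 : (0:ℝ) < (((2 + a) / S.g + 2) * S.Cc (1 + a)) ^ q :=
        Real.rpow_pos_of_pos hCC q
      exact mul_pos (inv_pos.mpr h2) (by positivity)
    refine ⟨S.kb β / (((((2 + a) / S.g + 2) * S.Cc (1 + a)) ^ q)⁻¹ * (2 / S.g + 2)),
      div_pos (S.kb_pos β) hK, ?_⟩
    intro R h0 h1
    rw [S.gridSum_eq h0, div_mul_eq_mul_div, div_le_iff₀ hK]
    calc S.kb β * R ^ (-β)
        ≤ (((((2 + a) / S.g + 2) * S.Cc (1 + a)) ^ q)⁻¹ * (2 / S.g + 2))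
            * ∑ k ∈ KF R, gterm S.μ a q R k := S.est_lower_q_neg hβ ha hq h0 h1
      _ = (∑ k ∈ KF R, gterm S.μ a q R k)
            * (((((2 + a) / S.g + 2) * S.Cc (1 + a)) ^ q)⁻¹ * (2 / S.g + 2)) := by ring

lemma tendsto_rpow_zero {e : ℝ} (he : 0 < e) :
    Tendsto (fun R : ℝ => R ^ e) (nhdsWithin 0 (Set.Ioi 0)) (nhds 0) := by
  have h1 := (Real.continuousAt_rpow_const 0 e (Or.inr he.le)).tendsto
  rw [Real.zero_rpow he.ne'] at h1
  exact h1.mono_left nhdsWithin_le_nhds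

lemma betaA_eq {a q β : ℝ} (hβ : ∑ i, S.p i ^ q * S.r i ^ β = 1) (ha : 0 < a) :
    betaA S.μ a q = β := by
  obtain ⟨C, hC, hup⟩ := S.gridSum_upper hβ ha
  obtain ⟨c, hc, hlow⟩ := S.gridSum_lower hβ ha
  set T : Set ℝ := {β' : ℝ | Filter.Tendsto (fun R => R ^ β' * gridSum S.μ a q R)
    (nhdsWithin 0 (Set.Ioi 0)) (nhds 0)} with hTdef
  have hmem : ∀ β', β < β' → β' ∈ T := by
    intro β' hβ'
    have h2 : ∀ᶠ R in nhdsWithin (0:ℝ) (Set.Ioi 0),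
        0 ≤ R ^ β' * gridSum S.μ a q R := by
      filter_upwards [self_mem_nhdsWithin] with R hR
      exact mul_nonneg (Real.rpow_nonneg (le_of_lt hR) β') (S.gridSum_nonneg hR)
    have h1 : ∀ᶠ R in nhdsWithin (0:ℝ) (Set.Ioi 0),
        R ^ β' * gridSum S.μ a q R ≤ C * R ^ (β' - β) := by
      filter_upwards [Ioo_mem_nhdsGT one_pos] with R hR
      obtain ⟨h0R, h1R⟩ := hR
      calc R ^ β' * gridSum S.μ a q R
          ≤ R ^ β' * (C * R ^ (-β)) :=
            mul_le_mul_of_nonneg_left (hup R h0R h1R) (Real.rpow_nonneg h0R.le β')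
        _ = C * R ^ (β' - β) := by
            rw [sub_eq_add_neg, Real.rpow_add h0R]
            ring
    have h3 : Tendsto (fun R : ℝ => C * R ^ (β' - β)) (nhdsWithin 0 (Set.Ioi 0))
        (nhds 0) := by
      have := (tendsto_rpow_zero (e := β' - β) (by linarith)).const_mul C
      rwa [mul_zero] at this
    exact squeeze_zero' h2 h1 h3
  have hlb : ∀ β' ∈ T, β ≤ β' := by
    intro β' hT
    by_contra hlt
    push_neg at hlt
    have h1 : ∀ᶠ R in nhdsWithin (0:ℝ) (Set.Ioi 0),
        c ≤ R ^ β' * gridSum S.μ a q R := by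
      filter_upwards [Ioo_mem_nhdsGT one_pos] with R hR
      obtain ⟨h0R, h1R⟩ := hR
      have hge := hlow R h0R h1R
      have h2 : c * R ^ (β' - β) ≤ R ^ β' * gridSum S.μ a q R := by
        calc c * R ^ (β' - β) = R ^ β' * (c * R ^ (-β)) := by
              rw [sub_eq_add_neg, Real.rpow_add h0R]
              ring
          _ ≤ R ^ β' * gridSum S.μ a q R :=
              mul_le_mul_of_nonneg_left hge (Real.rpow_nonneg h0R.le β')
      have h3 : (1:ℝ) ≤ R ^ (β' - β) := by
        have h4 := Real.rpow_le_rpow_of_exponent_ge h0R h1R.le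
          (show β' - β ≤ 0 by linarith)
        rwa [Real.rpow_zero] at h4
      nlinarith [hc]
    have h4 := hT.eventually_lt_const hc
    obtain ⟨R, hR1, hR2⟩ := (h1.and h4).exists
    linarith
  rw [betaA]
  apply le_antisymm
  · have hb : BddBelow T := ⟨β, fun x hx => hlb x hx⟩
    calc sInf T ≤ sInf (Set.Ioi β) :=
        csInf_le_csInf hb nonempty_Ioi (fun x hx => hmem x hx)
      _ = β := csInf_Ioi
  · exact le_csInf ⟨β + 1, hmem _ (by linarith)⟩ hlb

end IFSSetup

/-- for a self-similar measure `μ` with weights `p_i` on the attractor of an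
IFS of similarities with ratios `r_i`, the moment function `β_a(q)` is, for every
enlargement parameter `a > 0`, the unique real `β` with `Σ p_i^q r_i^β = 1`. -/
theorem stmt_17 (m : ℕ) (hm : 2 ≤ m) (ψ : ℕ → ℝ → ℝ) (ratio : ℕ → ℝ)
    (hratio : ∀ i, i < m → 0 < ratio i ∧ ratio i < 1)
    (hsim : ∀ i, i < m → ∀ x y : ℝ, |ψ i x - ψ i y| = ratio i * |x - y|)
    (hsub : ∀ i, i < m → ψ i '' Set.Icc 0 1 ⊆ Set.Icc 0 1)
    (hord : ∀ i, i < m → ψ i 0 < ψ i 1)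
    (hgap : ∀ i, i + 1 < m → ψ i 1 < ψ (i + 1) 0)
    (h0 : ψ 0 0 = 0) (h1 : ψ (m - 1) 1 = 1)
    (p : ℕ → ℝ) (hp : ∀ i, i < m → 0 < p i)
    (hpsum : ∑ i ∈ Finset.range m, p i = 1)
    (μ : Measure ℝ) [IsProbabilityMeasure μ]
    (hμ : ∀ A : Set ℝ, MeasurableSet A →
      μ A = ∑ i ∈ Finset.range m, ENNReal.ofReal (p i) * μ (ψ i ⁻¹' A))
    (q a β : ℝ) (ha : 0 < a)
    (hβ : ∑ i ∈ Finset.range m, p i ^ q * ratio i ^ β = 1) :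
    betaA μ a q = β := by
  -- the maps are increasing affine maps
  have haff : ∀ i, i < m → ∀ x : ℝ, ψ i x = ψ i 0 + ratio i * x := by
    intro i him x
    have hr := (hratio i him).1
    have h1' := hsim i him x 0
    rw [sub_zero] at h1'
    have h2' := hsim i him 1 0
    rw [sub_zero, abs_one, mul_one] at h2'
    have h3 : ψ i 1 - ψ i 0 = ratio i := by
      rcases abs_cases (ψ i 1 - ψ i 0) with ⟨he, _⟩ | ⟨he, hneg⟩
      · linarith
      · linarith [hord i him]
    have hcases : ψ i x - ψ i 0 = ratio i * x ∨ ψ i x - ψ i 0 = -(ratio i * x) := by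
      rcases (abs_eq (mul_nonneg hr.le (abs_nonneg x))).mp h1' with h | h
      · rcases abs_cases x with ⟨hx, _⟩ | ⟨hx, _⟩
        · left; rw [h, hx]
        · right; rw [h, hx]; ring
      · rcases abs_cases x with ⟨hx, _⟩ | ⟨hx, _⟩
        · right; rw [h, hx]
        · left; rw [h, hx]; ring
    rcases hcases with h | h
    · linarith
    · have h5 := hsim i him x 1
      have hring : ratio i * (x + 1) = ratio i * x + ratio i := by ring
      have h6 : ψ i x - ψ i 1 = -(ratio i * (x + 1)) := by linarith
      rw [h6, abs_neg, abs_mul, abs_of_pos hr] at h5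
      have h7 : |x + 1| = |x - 1| := mul_left_cancel₀ hr.ne' h5
      have h9 : (x + 1) ^ 2 = (x - 1) ^ 2 := by
        rw [← sq_abs (x + 1), ← sq_abs (x - 1), h7]
      have h8 : x = 0 := by nlinarith [h9]
      rw [h8] at h ⊢
      rw [mul_zero] at h ⊢
      linarith
  have hchain : ∀ j, j < m → ∀ i, i < j → ψ i 1 < ψ j 0 := by
    intro j
    induction j with
    | zero => omega
    | succ k ih =>
      intro hk i hij
      rcases Nat.lt_succ_iff_lt_or_eq.mp hij with hlt | heq
      · have hh1 := ih (by omega) i hlt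
        have hh2 := hord k (by omega)
        have hh3 := hgap k hk
        linarith
      · subst heq
        exact hgap i hk
  have hβ' : ∑ i : Fin m, p (i : ℕ) ^ q * ratio (i : ℕ) ^ β = 1 := by
    rw [Fin.sum_univ_eq_sum_range (fun i => p i ^ q * ratio i ^ β) m]
    exact hβ
  have hpsum' : ∑ i : Fin m, p (i : ℕ) = 1 := by
    rw [Fin.sum_univ_eq_sum_range (fun i => p i) m]
    exact hpsum
  have hiter' : ∀ A : Set ℝ, MeasurableSet A →
      μ A = ∑ i : Fin m, ENNReal.ofReal (p (i : ℕ))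
        * μ ((fun x => ψ (i : ℕ) 0 + ratio (i : ℕ) * x) ⁻¹' A) := by
    intro A hA
    rw [hμ A hA,
      ← Fin.sum_univ_eq_sum_range (fun i => ENNReal.ofReal (p i) * μ (ψ i ⁻¹' A)) m]
    refine Finset.sum_congr rfl (fun i _ => ?_)
    have hset : ψ (i : ℕ) ⁻¹' A = (fun x => ψ (i : ℕ) 0 + ratio (i : ℕ) * x) ⁻¹' A := by
      ext x
      simp only [mem_preimage]
      rw [haff (i : ℕ) i.isLt x]
    rw [hset]
  have hb0' : ∀ i : Fin m, 0 ≤ ψ (i : ℕ) 0 := by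
    intro i
    have := hsub (i : ℕ) i.isLt ⟨0, ⟨le_rfl, zero_le_one⟩, rfl⟩
    exact this.1
  have hb1' : ∀ i : Fin m, ψ (i : ℕ) 0 + ratio (i : ℕ) ≤ 1 := by
    intro i
    have h2 := hsub (i : ℕ) i.isLt ⟨1, ⟨zero_le_one, le_rfl⟩, rfl⟩
    have h3 := haff (i : ℕ) i.isLt 1
    rw [mul_one] at h3
    linarith [h2.2]
  have horder' : ∀ i j : Fin m, (i : ℕ) < (j : ℕ) →
      ψ (i : ℕ) 0 + ratio (i : ℕ) < ψ (j : ℕ) 0 := by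
    intro i j hij
    have h2 := hchain (j : ℕ) j.isLt (i : ℕ) hij
    have h3 := haff (i : ℕ) i.isLt 1
    rw [mul_one] at h3
    linarith
  exact IFSSetup.betaA_eq
    { m := m
      hm := hm
      b := fun i => ψ (i : ℕ) 0
      r := fun i => ratio (i : ℕ)
      p := fun i => p (i : ℕ)
      hr0 := fun i => (hratio (i : ℕ) i.isLt).1
      hr1 := fun i => (hratio (i : ℕ) i.isLt).2
      hp := fun i => hp (i : ℕ) i.isLt
      hpsum := hpsum'
      hb0 := hb0'
      hb1 := hb1'
      horder := horder'
      hfirst := ⟨⟨0, by omega⟩, h0⟩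
      hlast := ⟨⟨m - 1, by omega⟩, by
        have h3 := haff (m - 1) (by omega) 1
        rw [mul_one] at h3
        simp only []
        linarith [h1]⟩
      μ := μ
      hprob := inferInstance
      hiter := hiter' } hβ' ha
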